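/- (Total variation bound via disconnection.) Let G be a finite connected graph and A ⊆ V(G) nonempty. For x ∈ V(G), let X^x be the simple random walk started from x and τ^x its first hitting time of A. Then for all x, y ∈ V(G) \ A, the total variation distance between the laws of X^x_{τ^x} and X^y_{τ^y} satisfies d_TV( X^x_{τ^x}, X^y_{τ^y} ) ≤ 1 - P[ the trace { X^x_0, …, X^x_{τ^x} } disconnects y from A in G ], where a set S disconnects y from A if every path in G from y to A passes through S. -/

import Mathlib

open Finset

set_option linter.unusedSectionVars false

namespace TVW

attribute [local instance] Classical.propDecidable

variable {V : Type*} [Fintype V] [DecidableEq V]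

/-- total multiplicity (degree) -/
def dg (m : V → V → ℕ) (v : V) : ℝ := ∑ z, (m v z : ℝ)

/-- transition probability -/
noncomputable def stp (m : V → V → ℕ) (a b : V) : ℝ := (m a b : ℝ) / dg m a

/-- weight of a finite path (list) -/
noncomputable def Wt (m : V → V → ℕ) (v₀ : V) (L : List V) : ℝ :=
  ∏ i ∈ Finset.range (L.length - 1), stp m (L.getD i v₀) (L.getD (i+1) v₀)

lemma dg_nonneg (m : V → V → ℕ) (v : V) : 0 ≤ dg m v :=
  Finset.sum_nonneg fun _ _ => by positivity

lemma stp_nonneg (m : V → V → ℕ) (a b : V) : 0 ≤ stp m a b :=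
  div_nonneg (by positivity) (dg_nonneg m a)

lemma stp_le_one (m : V → V → ℕ) (a b : V) : stp m a b ≤ 1 := by
  rcases eq_or_lt_of_le (dg_nonneg m a) with h | h
  · simp [stp, ← h]
  · rw [stp, div_le_one h]
    exact Finset.single_le_sum (f := fun z => (m a z : ℝ)) (fun i _ => by positivity)
      (Finset.mem_univ b)

lemma sum_stp (m : V → V → ℕ) {a : V} (ha : 0 < dg m a) : ∑ b, stp m a b = 1 := by
  unfold stp
  rw [← Finset.sum_div]
  exact div_self (ne_of_gt ha)

lemma stp_pos_iff (m : V → V → ℕ) {a : V} (ha : 0 < dg m a) (b : V) :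
    stp m a b ≠ 0 ↔ 0 < m a b := by
  constructor
  · intro h
    by_contra hm
    have : m a b = 0 := by omega
    simp [stp, this] at h
  · intro h
    have h1 : (0:ℝ) < (m a b : ℝ) := by exact_mod_cast h
    exact ne_of_gt (div_pos h1 ha)

lemma Wt_nonneg (m : V → V → ℕ) (v₀ : V) (L : List V) : 0 ≤ Wt m v₀ L :=
  Finset.prod_nonneg fun _ _ => stp_nonneg m _ _

lemma Wt_le_one (m : V → V → ℕ) (v₀ : V) (L : List V) : Wt m v₀ L ≤ 1 :=
  Finset.prod_le_one (fun _ _ => stp_nonneg m _ _) (fun _ _ => stp_le_one m _ _)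

lemma Wt_nil (m : V → V → ℕ) (v₀ : V) : Wt m v₀ [] = 1 := by simp [Wt]

lemma Wt_single (m : V → V → ℕ) (v₀ v : V) : Wt m v₀ [v] = 1 := by simp [Wt]

lemma Wt_cons (m : V → V → ℕ) (v₀ a b : V) (l : List V) :
    Wt m v₀ (a :: b :: l) = stp m a b * Wt m v₀ (b :: l) := by
  have hlen : (a :: b :: l).length - 1 = (b :: l).length - 1 + 1 := by simp
  rw [Wt, hlen, Finset.prod_range_succ', mul_comm]
  simp only [Wt, List.getD_cons_succ, List.getD_cons_zero]

/-- positive steps along a path of nonzero weight -/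
lemma Wt_pos_step (m : V → V → ℕ) (v₀ : V) {L : List V} (h : Wt m v₀ L ≠ 0)
    {i : ℕ} (hi : i + 1 < L.length) : 0 < m (L.getD i v₀) (L.getD (i+1) v₀) := by
  rw [Wt, Finset.prod_ne_zero_iff] at h
  have hi' : i ∈ Finset.range (L.length - 1) := by
    simp only [Finset.mem_range]; omega
  have := h i hi'
  by_contra hm
  have : m (L.getD i v₀) (L.getD (i+1) v₀) = 0 := by omega
  simp [stp, this] at *
  tauto

/-- the split lemma -/
lemma Wt_split (m : V → V → ℕ) (v₀ : V) (L : List V) {k : ℕ} (hk : k < L.length) :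
    Wt m v₀ L = Wt m v₀ (L.take (k+1)) * Wt m v₀ (L.drop k) := by
  have h1 : (L.take (k+1)).length = k + 1 := by
    rw [List.length_take]; omega
  have h2 : (L.drop k).length = L.length - k := by simp
  have hgt : ∀ i, i < k → (L.take (k+1)).getD i v₀ = L.getD i v₀ := by
    intro i hi
    rw [List.getD_eq_getElem?_getD, List.getD_eq_getElem?_getD, List.getElem?_take]
    simp [Nat.lt_succ_of_lt hi]
  have hgt' : ∀ i, i ≤ k → (L.take (k+1)).getD i v₀ = L.getD i v₀ := by
    intro i hi
    rw [List.getD_eq_getElem?_getD, List.getD_eq_getElem?_getD, List.getElem?_take]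
    simp [Nat.lt_succ_of_le hi]
  have hgd : ∀ i, (L.drop k).getD i v₀ = L.getD (k + i) v₀ := by
    intro i
    rw [List.getD_eq_getElem?_getD, List.getD_eq_getElem?_getD, List.getElem?_drop]
  have hsplit : L.length - 1 = k + (L.length - 1 - k) := by omega
  rw [Wt, hsplit, Finset.prod_range_add]
  congr 1
  · rw [Wt, h1]
    simp only [Nat.add_sub_cancel]
    apply Finset.prod_congr rfl
    intro i hi
    rw [Finset.mem_range] at hi
    rw [hgt i hi, hgt' (i+1) (by omega)]
  · rw [Wt, h2]
    have : L.length - k - 1 = L.length - 1 - k := by omega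
    rw [this]
    apply Finset.prod_congr rfl
    intro i hi
    rw [hgd, hgd]
    congr 2 <;> omega

/-! ### Lists of given length -/

variable (V) in
noncomputable def Lists : ℕ → Finset (List V)
  | 0 => {([] : List V)}
  | (t+1) => (Finset.univ ×ˢ Lists t).image fun p => p.1 :: p.2

lemma mem_Lists {t : ℕ} {L : List V} : L ∈ Lists V t ↔ L.length = t := by
  induction t generalizing L with
  | zero => cases L <;> simp [Lists]
  | succ t ih =>
    cases L with
    | nil => simp [Lists]
    | cons a K =>
      simp only [Lists, Finset.mem_image, Finset.mem_product, Finset.mem_univ, true_and,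
        List.length_cons]
      constructor
      · rintro ⟨⟨v, M⟩, hM, hEq⟩
        injection hEq with h1 h2
        subst h1; subst h2
        simp [ih.mp hM]
      · intro h
        have h' : K.length = t := by simp at h; omega
        exact ⟨(a, K), ih.mpr h', rfl⟩

lemma sum_Lists_succ {t : ℕ} (f : List V → ℝ) :
    ∑ L ∈ Lists V (t+1), f L = ∑ v, ∑ K ∈ Lists V t, f (v :: K) := by
  rw [Lists, Finset.sum_image, Finset.sum_product]
  rintro ⟨v, M⟩ _ ⟨w, N⟩ _ h
  simp only [List.cons.injEq] at h
  simp [h.1, h.2]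

variable {m : V → V → ℕ} {v₀ : V}

/-- total weight of all continuations equals 1 -/
lemma TOT (hd : ∀ v, 0 < dg m v) : ∀ (t : ℕ) (v : V),
    ∑ K ∈ Lists V t, Wt m v₀ (v :: K) = 1 := by
  intro t
  induction t with
  | zero => intro v; simp [Lists, Wt_single]
  | succ t ih =>
    intro v
    rw [sum_Lists_succ]
    have : ∀ w, ∑ K ∈ Lists V t, Wt m v₀ (v :: w :: K)
        = stp m v w := by
      intro w
      simp only [Wt_cons]
      rw [← Finset.mul_sum, ih w, mul_one]
    simp only [this]
    exact sum_stp m (hd v)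

lemma Wt_snoc {L : List V} (hL : L ≠ []) (w : V) :
    Wt m v₀ (L ++ [w]) = Wt m v₀ L * stp m (L.getD (L.length - 1) v₀) w := by
  have hlen : (L ++ [w]).length = L.length + 1 := by simp
  have hpos : 1 ≤ L.length := List.length_pos_iff.mpr hL
  have hlen1 : (L ++ [w]).length - 1 = (L.length - 1) + 1 := by omega
  rw [Wt, hlen1, Finset.prod_range_succ]
  congr 1
  · rw [Wt]
    apply Finset.prod_congr rfl
    intro i hi
    rw [Finset.mem_range] at hi
    rw [List.getD_append _ _ _ _ (by omega), List.getD_append _ _ _ _ (by omega)]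
  · rw [List.getD_append _ _ _ _ (by omega), show L.length - 1 + 1 = L.length from by omega,
      List.getD_append_right _ _ _ _ (le_refl _)]
    simp

/-- gluing: weight of an appended path -/
lemma Wt_glue {M : List V} (hM : M ≠ []) (R : List V) :
    Wt m v₀ (M ++ R) = Wt m v₀ M * Wt m v₀ ((M.getD (M.length - 1) v₀) :: R) := by
  have hpos : 1 ≤ M.length := List.length_pos_iff.mpr hM
  have hk : M.length - 1 < (M ++ R).length := by simp; omega
  have h1 : (M ++ R).take (M.length - 1 + 1) = M := by
    rw [show M.length - 1 + 1 = M.length by omega]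
    exact List.take_left
  have h3 : M.drop (M.length - 1) = [M.getD (M.length - 1) v₀] := by
    rw [List.drop_eq_getElem_cons (by omega)]
    simp only [show M.length - 1 + 1 = M.length from by omega, List.drop_length]
    rw [List.getD_eq_getElem _ _ (by omega)]
  have h2 : (M ++ R).drop (M.length - 1) = (M.getD (M.length - 1) v₀) :: R := by
    rw [List.drop_append_of_le_length (by omega), h3]
    rfl
  calc Wt m v₀ (M ++ R)
      = Wt m v₀ ((M ++ R).take (M.length - 1 + 1)) * Wt m v₀ ((M ++ R).drop (M.length - 1)) :=
        Wt_split m v₀ _ hk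
    _ = _ := by rw [h1, h2]

/-- sum over all continuations of a fixed nonempty prefix -/
lemma EXT (hd : ∀ v, 0 < dg m v) {L : List V} (hL : L ≠ []) (u : ℕ) :
    ∑ K ∈ Lists V u, Wt m v₀ (L ++ K) = Wt m v₀ L := by
  cases u with
  | zero => simp [Lists, Wt]
  | succ u =>
    rw [sum_Lists_succ]
    have : ∀ w K, Wt m v₀ (L ++ w :: K)
        = Wt m v₀ L * (stp m (L.getD (L.length - 1) v₀) w * Wt m v₀ (w :: K)) := by
      intro w K
      rw [Wt_glue hL, Wt_cons]
    simp only [this]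
    have : ∀ w, ∑ K ∈ Lists V u,
        Wt m v₀ L * (stp m (L.getD (L.length - 1) v₀) w * Wt m v₀ (w :: K))
        = Wt m v₀ L * stp m (L.getD (L.length - 1) v₀) w := by
      intro w
      rw [← Finset.mul_sum, ← Finset.mul_sum, TOT hd u w, mul_one]
    simp only [this]
    rw [← Finset.mul_sum, sum_stp m (hd _), mul_one]

/-- sum of weights of all paths with a given prefix -/
lemma PRE (hd : ∀ v, 0 < dg m v) {C : List V} (hC : C ≠ []) {t : ℕ}
    (hc : C.length ≤ t) :
    ∑ M ∈ Lists V t, (if M.take C.length = C then Wt m v₀ M else 0) = Wt m v₀ C := by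
  rw [← Finset.sum_filter]
  have himg : (Lists V t).filter (fun M => M.take C.length = C)
      = (Lists V (t - C.length)).image (fun K => C ++ K) := by
    ext M
    simp only [Finset.mem_filter, Finset.mem_image, mem_Lists]
    constructor
    · rintro ⟨hlen, htake⟩
      refine ⟨M.drop C.length, by simp [hlen], ?_⟩
      nth_rewrite 1 [← htake]
      exact List.take_append_drop _ M
    · rintro ⟨K, hK, rfl⟩
      refine ⟨by simp; omega, List.take_left' rfl⟩
  rw [himg, Finset.sum_image (by intro a _ b _ h; exact List.append_cancel_left h)]
  exact EXT hd hC _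

/-! ### avoidance sums -/

def NoA (A : Finset V) (L : List V) : Prop := ∀ u ∈ L, u ∉ A

noncomputable def Av (m : V → V → ℕ) (v₀ : V) (A : Finset V) (v : V) (T : ℕ) : ℝ :=
  ∑ K ∈ Lists V T, if NoA A (v :: K) then Wt m v₀ (v :: K) else 0

lemma Av_nonneg (A : Finset V) (v : V) (T : ℕ) : 0 ≤ Av m v₀ A v T :=
  Finset.sum_nonneg fun K _ => by
    by_cases h : NoA A (v :: K) <;> simp [h, Wt_nonneg]

lemma Av_le_TOT (hd : ∀ v, 0 < dg m v) (A : Finset V) (v : V) (T : ℕ) :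
    Av m v₀ A v T ≤ 1 := by
  calc Av m v₀ A v T ≤ ∑ K ∈ Lists V T, Wt m v₀ (v :: K) := by
        apply Finset.sum_le_sum
        intro K _
        by_cases h : NoA A (v :: K) <;> simp [h, Wt_nonneg]
    _ = 1 := TOT hd T v

lemma Av_mem (A : Finset V) {v : V} (hv : v ∈ A) (T : ℕ) : Av m v₀ A v T = 0 := by
  apply Finset.sum_eq_zero
  intro K _
  have : ¬ NoA A (v :: K) := fun h => h v (by simp) hv
  simp [this]

lemma Av_step (A : Finset V) (v : V) (T : ℕ) :
    Av m v₀ A v (T+1) = if v ∉ A then ∑ w, stp m v w * Av m v₀ A w T else 0 := by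
  rw [Av, sum_Lists_succ]
  by_cases hv : v ∈ A
  · simp only [hv, not_true_eq_false, if_false]
    apply Finset.sum_eq_zero
    intro w _
    apply Finset.sum_eq_zero
    intro K _
    have : ¬ NoA A (v :: w :: K) := fun h => h v (by simp) hv
    simp [this]
  · simp only [hv, not_false_eq_true, if_true]
    apply Finset.sum_congr rfl
    intro w _
    rw [Av, Finset.mul_sum]
    apply Finset.sum_congr rfl
    intro K _
    have hiff : NoA A (v :: w :: K) ↔ NoA A (w :: K) := by
      constructor
      · intro h u hu; exact h u (List.mem_cons_of_mem _ hu)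
      · intro h u hu
        rcases List.mem_cons.mp hu with rfl | hu'
        · exact hv
        · exact h u hu'
    by_cases h : NoA A (w :: K)
    · simp [h, hiff, Wt_cons]
    · simp [h, hiff.not]

variable [Nonempty V]

noncomputable def MxAv (m : V → V → ℕ) (v₀ : V) (A : Finset V) (T : ℕ) : ℝ :=
  Finset.univ.sup' Finset.univ_nonempty (fun w => Av m v₀ A w T)

lemma Av_le_Mx (A : Finset V) (v : V) (T : ℕ) : Av m v₀ A v T ≤ MxAv m v₀ A T :=
  Finset.le_sup' (fun w => Av m v₀ A w T) (Finset.mem_univ v)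

lemma Mx_nonneg (A : Finset V) (T : ℕ) : 0 ≤ MxAv m v₀ A T :=
  le_trans (Av_nonneg A (Classical.arbitrary V) T) (Av_le_Mx A _ T)

lemma Av_decomp (hd : ∀ v, 0 < dg m v) (A : Finset V) (u : ℕ) : ∀ (s : ℕ) (v : V),
    Av m v₀ A v (s + u) ≤ Av m v₀ A v s * MxAv m v₀ A u := by
  intro s
  induction s with
  | zero =>
    intro v
    by_cases hv : v ∈ A
    · simp [Av_mem A hv]
    · have h0 : Av m v₀ A v 0 = 1 := by
        simp [Av, Lists, Wt_single]
        intro u hu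
        rcases List.mem_singleton.mp hu with rfl
        exact hv
      rw [Nat.zero_add, h0, one_mul]
      exact Av_le_Mx A v u
  | succ s ih =>
    intro v
    have harr : s + 1 + u = (s + u) + 1 := by omega
    rw [harr, Av_step, Av_step]
    by_cases hv : v ∈ A
    · simp [hv]
    · simp only [hv, not_false_eq_true, if_true]
      rw [Finset.sum_mul]
      apply Finset.sum_le_sum
      intro w _
      rw [mul_assoc]
      exact mul_le_mul_of_nonneg_left (ih w) (stp_nonneg m v w)

lemma Av_pow (hd : ∀ v, 0 < dg m v) (A : Finset V) (T₀ : ℕ) : ∀ (k : ℕ) (v : V),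
    Av m v₀ A v (k * T₀) ≤ (MxAv m v₀ A T₀)^k := by
  intro k
  induction k with
  | zero => intro v; simpa using Av_le_TOT hd A v 0
  | succ k ih =>
    intro v
    have harr : (k+1) * T₀ = (k * T₀) + T₀ := by ring
    rw [harr, pow_succ]
    calc Av m v₀ A v (k * T₀ + T₀) ≤ Av m v₀ A v (k * T₀) * MxAv m v₀ A T₀ :=
          Av_decomp hd A T₀ (k * T₀) v
      _ ≤ (MxAv m v₀ A T₀)^k * MxAv m v₀ A T₀ :=
          mul_le_mul_of_nonneg_right (ih v) (Mx_nonneg A T₀)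

lemma getD_take' (L : List V) (i k : ℕ) (hik : i < k) (hiL : i < L.length) :
    (L.take k).getD i v₀ = L.getD i v₀ := by
  rw [List.getD_eq_getElem?_getD, List.getD_eq_getElem?_getD, List.getElem?_take]
  simp [hik]

lemma AvChain (hd : ∀ v, 0 < dg m v) (A : Finset V) {C : List V} {v : V} {T : ℕ}
    (hC : C ≠ []) (hC0 : C.getD 0 v₀ = v) (hCA : ∃ i < C.length, C.getD i v₀ ∈ A)
    (hT : C.length ≤ T + 1) :
    Av m v₀ A v T ≤ 1 - Wt m v₀ C := by
  have hCpos : 1 ≤ C.length := List.length_pos_iff.mpr hC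
  have key : ∀ K ∈ Lists V T,
      (if NoA A (v :: K) then Wt m v₀ (v :: K) else 0)
      ≤ Wt m v₀ (v :: K) - (if (v :: K).take C.length = C then Wt m v₀ (v :: K) else 0) := by
    intro K hK
    have hKlen : K.length = T := mem_Lists.mp hK
    by_cases hf : (v :: K).take C.length = C
    · have hnoA : ¬ NoA A (v :: K) := by
        obtain ⟨i, hi, hiA⟩ := hCA
        intro hno
        have h1 : (v :: K).getD i v₀ = C.getD i v₀ := by
          rw [← hf, getD_take' _ i _ hi (by simp; omega)]
        have h2 : (v :: K).getD i v₀ ∈ (v :: K) := by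
          rw [List.getD_eq_getElem _ _ (by simp; omega)]
          exact List.getElem_mem _
        exact hno _ h2 (h1 ▸ hiA)
      simp [hnoA, hf]
    · simp only [hf, if_false, sub_zero]
      by_cases h : NoA A (v :: K) <;> simp [h, Wt_nonneg]
  calc Av m v₀ A v T ≤ ∑ K ∈ Lists V T,
        (Wt m v₀ (v :: K) - (if (v :: K).take C.length = C then Wt m v₀ (v :: K) else 0)) :=
        Finset.sum_le_sum key
    _ = 1 - ∑ K ∈ Lists V T, (if (v :: K).take C.length = C then Wt m v₀ (v :: K) else 0) := by
        rw [Finset.sum_sub_distrib, TOT hd T v]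
    _ ≤ 1 - Wt m v₀ C := by
        have hPRE : ∑ M ∈ Lists V (T+1), (if M.take C.length = C then Wt m v₀ M else 0)
            = Wt m v₀ C := PRE hd hC hT
        rw [sum_Lists_succ] at hPRE
        have hv' : ∀ v', v' ≠ v → (∑ K ∈ Lists V T,
            (if (v' :: K).take C.length = C then Wt m v₀ (v' :: K) else 0)) = 0 := by
          intro v' hv'
          apply Finset.sum_eq_zero
          intro K _
          have : ¬ ((v' :: K).take C.length = C) := by
            intro hf
            apply hv'
            have : (v' :: K).getD 0 v₀ = C.getD 0 v₀ := by
              rw [← hf, getD_take' _ 0 _ (by omega) (by simp)]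
            rw [List.getD_cons_zero] at this
            rw [hC0] at this
            exact this
          simp [this]
        rw [Finset.sum_eq_single v (fun b _ hb => hv' b hb) (by simp)] at hPRE
        rw [hPRE]

/-- extracting a path from reflexive-transitive closure -/
lemma RTG_list {r : V → V → Prop} {v a : V} (h : Relation.ReflTransGen r v a) :
    ∃ C : List V, C ≠ [] ∧ C.getD 0 v₀ = v ∧ C.getD (C.length - 1) v₀ = a ∧
      ∀ i, i + 1 < C.length → r (C.getD i v₀) (C.getD (i+1) v₀) := by
  induction h using Relation.ReflTransGen.head_induction_on with
  | refl => exact ⟨[a], by simp, by simp, by simp, by simp⟩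
  | @head u c h' _ ih =>
    obtain ⟨C, hne, h0, hl, hstep⟩ := ih
    have hCpos : 1 ≤ C.length := List.length_pos_iff.mpr hne
    refine ⟨u :: C, by simp, by simp, ?_, ?_⟩
    · have : (u :: C).length - 1 = (C.length - 1) + 1 := by simp; omega
      rw [this, List.getD_cons_succ, hl]
    · intro i hi
      cases i with
      | zero =>
        rw [List.getD_cons_zero, List.getD_cons_succ, h0]
        exact h'
      | succ i =>
        simp only [List.getD_cons_succ]
        exact hstep i (by simp at hi; omega)

/-! ### loop erasure machinery -/

/-- stopped path predicate: starts at `z`, interior avoids `A`, ends in `A` -/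
def StpP (A : Finset V) (v₀ z : V) (L : List V) : Prop :=
  L ≠ [] ∧ L.getD 0 v₀ = z ∧ (∀ i, i + 1 < L.length → L.getD i v₀ ∉ A) ∧
    L.getD (L.length - 1) v₀ ∈ A

lemma getD_drop' (L : List V) (k i : ℕ) : (L.drop k).getD i v₀ = L.getD (k + i) v₀ := by
  rw [List.getD_eq_getElem?_getD, List.getD_eq_getElem?_getD, List.getElem?_drop]

/-- last occurrence of `v` in `L` (0 if none) -/
noncomputable def lastOcc (v₀ : V) (L : List V) (v : V) : ℕ :=
  Nat.findGreatest (fun i => L.getD i v₀ = v) (L.length - 1)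

lemma lastOcc_le (L : List V) (v : V) : lastOcc v₀ L v ≤ L.length - 1 := by
  unfold lastOcc; exact Nat.findGreatest_le (P := fun i => L.getD i v₀ = v) _

lemma lastOcc_spec {L : List V} {v : V} {k : ℕ} (hk : k ≤ L.length - 1)
    (h : L.getD k v₀ = v) : L.getD (lastOcc v₀ L v) v₀ = v := by
  unfold lastOcc; exact Nat.findGreatest_spec (P := fun i => L.getD i v₀ = v) hk h

lemma lastOcc_ge {L : List V} {v : V} {k : ℕ} (hk : k ≤ L.length - 1)
    (h : L.getD k v₀ = v) : k ≤ lastOcc v₀ L v := by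
  unfold lastOcc; exact Nat.le_findGreatest (P := fun i => L.getD i v₀ = v) hk h

lemma lastOcc_max {L : List V} {v : V} {t : ℕ} (h1 : lastOcc v₀ L v < t)
    (h2 : t ≤ L.length - 1) : L.getD t v₀ ≠ v := by
  unfold lastOcc at h1; exact Nat.findGreatest_is_greatest (P := fun i => L.getD i v₀ = v) h1 h2

lemma lastOcc_eq {L : List V} {v : V} {k : ℕ} (hk : k ≤ L.length - 1)
    (h : L.getD k v₀ = v) (hmax : ∀ t, k < t → t ≤ L.length - 1 → L.getD t v₀ ≠ v) :
    lastOcc v₀ L v = k := by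
  refine le_antisymm ?_ (lastOcc_ge hk h)
  by_contra hc
  push_neg at hc
  exact hmax _ hc (lastOcc_le L v) (lastOcc_spec hk h)

/-- loop erasure times -/
noncomputable def leT (v₀ : V) (L : List V) : ℕ → ℕ
  | 0 => lastOcc v₀ L (L.getD 0 v₀)
  | (i+1) => if leT v₀ L i < L.length - 1
      then lastOcc v₀ L (L.getD (leT v₀ L i + 1) v₀)
      else leT v₀ L i

lemma leT_le (L : List V) : ∀ i, leT v₀ L i ≤ L.length - 1 := by
  intro i
  induction i with
  | zero => exact lastOcc_le L _
  | succ i ih =>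
    rw [leT]
    split
    · exact lastOcc_le L _
    · exact ih

lemma leT_getD0 (L : List V) : L.getD (leT v₀ L 0) v₀ = L.getD 0 v₀ :=
  lastOcc_spec (by omega) rfl

lemma leT_succ (L : List V) {i : ℕ} (h : leT v₀ L i < L.length - 1) :
    leT v₀ L i < leT v₀ L (i+1) ∧
      L.getD (leT v₀ L (i+1)) v₀ = L.getD (leT v₀ L i + 1) v₀ := by
  rw [leT, if_pos h]
  constructor
  · have := lastOcc_ge (v₀ := v₀) (L := L) (k := leT v₀ L i + 1) (by omega) rfl
    omega
  · exact lastOcc_spec (by omega) rfl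

lemma leT_succ_stall (L : List V) {i : ℕ} (h : ¬ (leT v₀ L i < L.length - 1)) :
    leT v₀ L (i+1) = leT v₀ L i := by
  rw [leT, if_neg h]

lemma leT_mono (L : List V) : Monotone (leT v₀ L) := by
  apply monotone_nat_of_le_succ
  intro i
  by_cases h : leT v₀ L i < L.length - 1
  · exact le_of_lt (leT_succ L h).1
  · rw [leT_succ_stall L h]

lemma leT_max (L : List V) {i t : ℕ} (h1 : leT v₀ L i < t) (h2 : t ≤ L.length - 1) :
    L.getD t v₀ ≠ L.getD (leT v₀ L i) v₀ := by
  cases i with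
  | zero => rw [leT_getD0]; exact lastOcc_max h1 h2
  | succ i =>
    by_cases h : leT v₀ L i < L.length - 1
    · have hs := (leT_succ L h).2
      rw [hs]
      have : leT v₀ L (i+1) = lastOcc v₀ L (L.getD (leT v₀ L i + 1) v₀) := by
        rw [leT, if_pos h]
      rw [this] at h1
      exact lastOcc_max h1 h2
    · rw [leT_succ_stall L h] at h1 ⊢
      have := leT_le (v₀ := v₀) L i
      omega

lemma leT_reach (v₀ : V) (L : List V) : ∃ i, leT v₀ L i = L.length - 1 := by
  have key : ∀ i, leT v₀ L i = L.length - 1 ∨ i ≤ leT v₀ L i := by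
    intro i
    induction i with
    | zero => right; omega
    | succ i ih =>
      rcases ih with h | h
      · left; rw [leT_succ_stall L (by omega), h]
      · by_cases hlt : leT v₀ L i < L.length - 1
        · right
          have := (leT_succ L hlt).1
          omega
        · left
          have := leT_le (v₀ := v₀) L i
          rw [leT_succ_stall L hlt]
          omega
  rcases key (L.length - 1) with h | h
  · exact ⟨_, h⟩
  · exact ⟨_, le_antisymm (leT_le L _) h⟩

/-- index of the end of the loop erasure -/
noncomputable def Ix (v₀ : V) (L : List V) : ℕ := Nat.find (leT_reach v₀ L)

lemma Ix_spec (L : List V) : leT v₀ L (Ix v₀ L) = L.length - 1 :=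
  Nat.find_spec (leT_reach v₀ L)

lemma Ix_min {L : List V} {i : ℕ} (h : i < Ix v₀ L) : leT v₀ L i < L.length - 1 := by
  have := Nat.find_min (leT_reach v₀ L) h
  have := leT_le (v₀ := v₀) L i
  omega

lemma leT_strict (L : List V) {i j : ℕ} (hij : i < j) (hj : j ≤ Ix v₀ L) :
    leT v₀ L i < leT v₀ L j := by
  have h1 : leT v₀ L i < leT v₀ L (i+1) := (leT_succ L (Ix_min (by omega))).1
  have h2 : leT v₀ L (i+1) ≤ leT v₀ L j := leT_mono L (by omega)
  omega

/-- sector predicate: `p` meets the loop erasure of `q` -/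
def Sec (v₀ : V) (q p : List V) : Prop :=
  ∃ i, i ≤ Ix v₀ q ∧ ∃ t, t < p.length ∧ p.getD t v₀ = q.getD (leT v₀ q i) v₀

/-- the involution -/
noncomputable def PhiQ (v₀ : V) (qp : List V × List V) : List V × List V :=
  if h : Sec v₀ qp.1 qp.2 then
    (qp.1.take (leT v₀ qp.1 (Nat.find h) + 1) ++
      qp.2.drop (lastOcc v₀ qp.2 (qp.1.getD (leT v₀ qp.1 (Nat.find h)) v₀) + 1),
     qp.2.take (lastOcc v₀ qp.2 (qp.1.getD (leT v₀ qp.1 (Nat.find h)) v₀) + 1) ++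
      qp.1.drop (leT v₀ qp.1 (Nat.find h) + 1))
  else qp

lemma PhiQ_pos {q p : List V} (h : Sec v₀ q p) :
    PhiQ v₀ (q,p) = (q.take (leT v₀ q (Nat.find h) + 1) ++
        p.drop (lastOcc v₀ p (q.getD (leT v₀ q (Nat.find h)) v₀) + 1),
      p.take (lastOcc v₀ p (q.getD (leT v₀ q (Nat.find h)) v₀) + 1) ++
        q.drop (leT v₀ q (Nat.find h) + 1)) := by
  unfold PhiQ
  rw [dif_pos h]

/-- the main involution lemma -/
lemma Phi_main {A : Finset V} {y x : V} {q p : List V}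
    (hq : StpP A v₀ y q) (hp : StpP A v₀ x p) (hsec : Sec v₀ q p) :
    StpP A v₀ y (PhiQ v₀ (q,p)).1 ∧ StpP A v₀ x (PhiQ v₀ (q,p)).2 ∧
    Sec v₀ (PhiQ v₀ (q,p)).1 (PhiQ v₀ (q,p)).2 ∧
    PhiQ v₀ (PhiQ v₀ (q,p)) = (q,p) ∧
    Wt m v₀ (PhiQ v₀ (q,p)).1 * Wt m v₀ (PhiQ v₀ (q,p)).2 = Wt m v₀ q * Wt m v₀ p ∧
    (PhiQ v₀ (q,p)).1.getD ((PhiQ v₀ (q,p)).1.length - 1) v₀ = p.getD (p.length - 1) v₀ ∧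
    (PhiQ v₀ (q,p)).2.getD ((PhiQ v₀ (q,p)).2.length - 1) v₀ = q.getD (q.length - 1) v₀ ∧
    (PhiQ v₀ (q,p)).1.length + (PhiQ v₀ (q,p)).2.length = q.length + p.length := by
  obtain ⟨hqne, hqhead, hqint, hqlast⟩ := hq
  obtain ⟨hpne, hphead, hpint, hplast⟩ := hp
  have hlq : 1 ≤ q.length := List.length_pos_iff.mpr hqne
  have hlp : 1 ≤ p.length := List.length_pos_iff.mpr hpne
  have hPhi0 := PhiQ_pos (v₀ := v₀) hsec
  set j := Nat.find hsec with hjdef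
  obtain ⟨hjIx, t0, ht0, ht0v⟩ : j ≤ Ix v₀ q ∧ ∃ t, t < p.length ∧
      p.getD t v₀ = q.getD (leT v₀ q j) v₀ := Nat.find_spec hsec
  set tq := leT v₀ q j with htqdef
  set bj := q.getD tq v₀ with hbjdef
  set s := lastOcc v₀ p bj with hsdef
  have htq_le : tq ≤ q.length - 1 := leT_le q j
  have hs_spec : p.getD s v₀ = bj := lastOcc_spec (by omega) ht0v
  have hs_le : s ≤ p.length - 1 := lastOcc_le p bj
  have hs_max : ∀ t, s < t → t ≤ p.length - 1 → p.getD t v₀ ≠ bj :=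
    fun t h1 h2 => lastOcc_max h1 h2
  have hjmin : ∀ i, i < j → ∀ t, t < p.length → p.getD t v₀ ≠ q.getD (leT v₀ q i) v₀ := by
    intro i hi t ht hv
    exact Nat.find_min hsec hi ⟨by omega, t, ht, hv⟩
  by_cases hjx : j = Ix v₀ q
  · -- fixed point case
    have htq : tq = q.length - 1 := by rw [htqdef, hjx]; exact Ix_spec q
    have hbjA : bj ∈ A := by rw [hbjdef, htq]; exact hqlast
    have ht0last : t0 = p.length - 1 := by
      by_contra hne
      exact hpint t0 (by omega) (by rw [ht0v]; exact hbjA)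
    have hplastbj : p.getD (p.length - 1) v₀ = bj := by rw [← ht0last]; exact ht0v
    have hsv : s = p.length - 1 := by
      rw [hsdef]
      exact lastOcc_eq (le_refl _) hplastbj (fun t h1 h2 => by omega)
    have hfix : PhiQ v₀ (q, p) = (q, p) := by
      rw [hPhi0, hsv, htq]
      rw [show p.length - 1 + 1 = p.length from by omega,
        show q.length - 1 + 1 = q.length from by omega]
      rw [List.drop_length, List.take_length, List.append_nil,
        List.drop_length, List.take_length, List.append_nil]
    rw [hfix]
    refine ⟨⟨hqne, hqhead, hqint, hqlast⟩, ⟨hpne, hphead, hpint, hplast⟩, hsec, hfix, rfl,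
      ?_, ?_, rfl⟩
    · rw [hplastbj, hbjdef, htq]
    · rw [hplastbj, hbjdef, htq]
  · -- generic case
    have hjlt : j < Ix v₀ q := lt_of_le_of_ne hjIx hjx
    have htq_lt : tq < q.length - 1 := Ix_min hjlt
    have hbjA : bj ∉ A := by
      rw [hbjdef]; exact hqint tq (by omega)
    have hs_lt : s < p.length - 1 := by
      rcases lt_or_eq_of_le hs_le with h | h
      · exact h
      · exfalso; apply hbjA; rw [← hs_spec, h]; exact hplast
    set q' := q.take (tq+1) ++ p.drop (s+1) with hq'def
    set p' := p.take (s+1) ++ q.drop (tq+1) with hp'def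
    have hPhi : PhiQ v₀ (q, p) = (q', p') := hPhi0
    have hlen_take_q : (q.take (tq+1)).length = tq + 1 := by
      rw [List.length_take]; omega
    have hlen_take_p : (p.take (s+1)).length = s + 1 := by
      rw [List.length_take]; omega
    have hlenq' : q'.length = (tq+1) + (p.length - (s+1)) := by
      rw [hq'def, List.length_append, hlen_take_q, List.length_drop]
    have hlenp' : p'.length = (s+1) + (q.length - (tq+1)) := by
      rw [hp'def, List.length_append, hlen_take_p, List.length_drop]
    have hq'low : ∀ i, i ≤ tq → q'.getD i v₀ = q.getD i v₀ := by
      intro i hi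
      rw [hq'def, List.getD_append _ _ _ _ (by omega), getD_take' _ _ _ (by omega) (by omega)]
    have hq'high : ∀ u, u < p.length - (s+1) → q'.getD (tq+1+u) v₀ = p.getD (s+1+u) v₀ := by
      intro u hu
      rw [hq'def, List.getD_append_right _ _ _ _ (by omega), hlen_take_q,
        show tq+1+u - (tq+1) = u from by omega, getD_drop']
    have hp'low : ∀ i, i ≤ s → p'.getD i v₀ = p.getD i v₀ := by
      intro i hi
      rw [hp'def, List.getD_append _ _ _ _ (by omega), getD_take' _ _ _ (by omega) (by omega)]
    have hp'high : ∀ u, u < q.length - (tq+1) → p'.getD (s+1+u) v₀ = q.getD (tq+1+u) v₀ := by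
      intro u hu
      rw [hp'def, List.getD_append_right _ _ _ _ (by omega), hlen_take_p,
        show s+1+u - (s+1) = u from by omega, getD_drop']
    have hq'ne : q' ≠ [] := by
      have : 0 < q'.length := by omega
      exact List.length_pos_iff.mp this
    have hp'ne : p' ≠ [] := by
      have : 0 < p'.length := by omega
      exact List.length_pos_iff.mp this
    have hq'head : q'.getD 0 v₀ = y := by rw [hq'low 0 (by omega)]; exact hqhead
    have hp'head : p'.getD 0 v₀ = x := by rw [hp'low 0 (by omega)]; exact hphead
    have hq'last : q'.getD (q'.length - 1) v₀ = p.getD (p.length - 1) v₀ := by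
      have hu : q'.length - 1 = tq+1 + (p.length - (s+1) - 1) := by omega
      rw [hu, hq'high _ (by omega)]
      congr 1
      omega
    have hp'last : p'.getD (p'.length - 1) v₀ = q.getD (q.length - 1) v₀ := by
      have hu : p'.length - 1 = s+1 + (q.length - (tq+1) - 1) := by omega
      rw [hu, hp'high _ (by omega)]
      congr 1
      omega
    have hq'int : ∀ i, i + 1 < q'.length → q'.getD i v₀ ∉ A := by
      intro i hi
      by_cases hcase : i ≤ tq
      · rw [hq'low i hcase]; exact hqint i (by omega)
      · obtain ⟨u, rfl, hu⟩ : ∃ u, i = tq+1+u ∧ u < p.length - (s+1) :=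
          ⟨i - (tq+1), by omega, by omega⟩
        rw [hq'high u hu]
        exact hpint _ (by omega)
    have hp'int : ∀ i, i + 1 < p'.length → p'.getD i v₀ ∉ A := by
      intro i hi
      by_cases hcase : i ≤ s
      · rw [hp'low i hcase]; exact hpint i (by omega)
      · obtain ⟨u, rfl, hu⟩ : ∃ u, i = s+1+u ∧ u < q.length - (tq+1) :=
          ⟨i - (s+1), by omega, by omega⟩
        rw [hp'high u hu]
        exact hqint _ (by omega)
    have hq'Stp : StpP A v₀ y q' := ⟨hq'ne, hq'head, hq'int, by rw [hq'last]; exact hplast⟩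
    have hp'Stp : StpP A v₀ x p' := ⟨hp'ne, hp'head, hp'int, by rw [hp'last]; exact hqlast⟩
    -- weights
    have hdropconsp : p.drop s = bj :: p.drop (s+1) := by
      rw [List.drop_eq_getElem_cons (by omega)]
      congr 1
      rw [← List.getD_eq_getElem _ v₀ (by omega)]
      exact hs_spec
    have hdropconsq : q.drop tq = bj :: q.drop (tq+1) := by
      rw [List.drop_eq_getElem_cons (by omega)]
      congr 1
      rw [← List.getD_eq_getElem _ v₀ (by omega)]
    have htake_last_q : (q.take (tq+1)).getD ((q.take (tq+1)).length - 1) v₀ = bj := by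
      rw [hlen_take_q, Nat.add_sub_cancel, getD_take' _ _ _ (by omega) (by omega)]
    have htake_last_p : (p.take (s+1)).getD ((p.take (s+1)).length - 1) v₀ = bj := by
      rw [hlen_take_p, Nat.add_sub_cancel, getD_take' _ _ _ (by omega) (by omega)]
      exact hs_spec
    have htakene_q : q.take (tq+1) ≠ [] := by
      have : 0 < (q.take (tq+1)).length := by omega
      exact List.length_pos_iff.mp this
    have htakene_p : p.take (s+1) ≠ [] := by
      have : 0 < (p.take (s+1)).length := by omega
      exact List.length_pos_iff.mp this
    have hq'wt : Wt m v₀ q' = Wt m v₀ (q.take (tq+1)) * Wt m v₀ (p.drop s) := by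
      rw [hq'def, Wt_glue htakene_q, htake_last_q, hdropconsp]
    have hp'wt : Wt m v₀ p' = Wt m v₀ (p.take (s+1)) * Wt m v₀ (q.drop tq) := by
      rw [hp'def, Wt_glue htakene_p, htake_last_p, hdropconsq]
    have hwt : Wt m v₀ q' * Wt m v₀ p' = Wt m v₀ q * Wt m v₀ p := by
      rw [hq'wt, hp'wt, Wt_split m v₀ q (k := tq) (by omega),
        Wt_split m v₀ p (k := s) (by omega)]
      ring
    -- agreement of loop erasure times
    have hOCC : ∀ i, i ≤ j → lastOcc v₀ q' (q.getD (leT v₀ q i) v₀) = leT v₀ q i := by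
      intro i hij
      have hle_i : leT v₀ q i ≤ tq := leT_mono q hij
      apply lastOcc_eq (by omega) (by rw [hq'low _ hle_i])
      intro t ht1 ht2
      by_cases hct : t ≤ tq
      · rw [hq'low t hct]
        exact leT_max q (by omega) (by omega)
      · obtain ⟨u, rfl, hu⟩ : ∃ u, t = tq+1+u ∧ u < p.length - (s+1) :=
          ⟨t - (tq+1), by omega, by omega⟩
        rw [hq'high u hu]
        rcases eq_or_lt_of_le hij with rfl | hij'
        · exact hs_max _ (by omega) (by omega)
        · exact hjmin i hij' _ (by omega)
    have hAGREE : ∀ i, i ≤ j → leT v₀ q' i = leT v₀ q i := by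
      intro i
      induction i with
      | zero =>
        intro _
        have h0 : q'.getD 0 v₀ = q.getD (leT v₀ q 0) v₀ := by
          rw [hq'low 0 (by omega)]
          exact (leT_getD0 q).symm
        calc leT v₀ q' 0 = lastOcc v₀ q' (q'.getD 0 v₀) := by rw [leT]
          _ = lastOcc v₀ q' (q.getD (leT v₀ q 0) v₀) := by rw [h0]
          _ = leT v₀ q 0 := hOCC 0 (by omega)
      | succ i ih =>
        intro hi1
        have hi_lt_Ix : i < Ix v₀ q := by omega
        have hstep := leT_succ q (Ix_min hi_lt_Ix)
        have hih := ih (by omega)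
        have hle_i1 : leT v₀ q (i+1) ≤ tq := leT_mono q hi1
        have hle_i : leT v₀ q i ≤ tq := leT_mono q (by omega)
        have hcond : leT v₀ q' i < q'.length - 1 := by rw [hih]; omega
        have hidx : leT v₀ q i + 1 ≤ tq := by omega
        calc leT v₀ q' (i+1)
            = lastOcc v₀ q' (q'.getD (leT v₀ q' i + 1) v₀) := by rw [leT, if_pos hcond]
          _ = lastOcc v₀ q' (q.getD (leT v₀ q i + 1) v₀) := by rw [hih, hq'low _ hidx]
          _ = lastOcc v₀ q' (q.getD (leT v₀ q (i+1)) v₀) := by rw [← hstep.2]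
          _ = leT v₀ q (i+1) := hOCC (i+1) hi1
    have hIx' : j < Ix v₀ q' := by
      rw [Ix, Nat.lt_find_iff]
      intro i hi
      rw [hAGREE i hi]
      have : leT v₀ q i ≤ tq := leT_mono q hi
      omega
    have hsec' : Sec v₀ q' p' := by
      refine ⟨j, le_of_lt hIx', s, by omega, ?_⟩
      rw [hp'low s (le_refl s), hAGREE j (le_refl j), hq'low tq (le_refl tq)]
      exact hs_spec
    have hfind' : Nat.find hsec' = j := by
      apply (Nat.find_eq_iff hsec').mpr
      refine ⟨⟨le_of_lt hIx', s, by omega, ?_⟩, ?_⟩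
      · rw [hp'low s (le_refl s), hAGREE j (le_refl j), hq'low tq (le_refl tq)]
        exact hs_spec
      · intro i hi
        rintro ⟨hiIx', t, ht, htv⟩
        rw [hAGREE i (by omega), hq'low _ (leT_mono q (le_of_lt hi))] at htv
        by_cases hts : t ≤ s
        · rw [hp'low t hts] at htv
          exact hjmin i hi t (by omega) htv
        · obtain ⟨u, rfl, hu⟩ : ∃ u, t = s+1+u ∧ u < q.length - (tq+1) :=
            ⟨t - (s+1), by omega, by omega⟩
          rw [hp'high u hu] at htv
          have hlei : leT v₀ q i ≤ tq := leT_mono q (le_of_lt hi)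
          exact leT_max q (show leT v₀ q i < tq+1+u from by omega) (by omega) htv
    have hs'eq : lastOcc v₀ p' (q'.getD (leT v₀ q' (Nat.find hsec')) v₀) = s := by
      rw [hfind', hAGREE j (le_refl j), hq'low tq (le_refl tq)]
      apply lastOcc_eq (by omega) (by rw [hp'low s (le_refl s)]; exact hs_spec)
      intro t ht1 ht2
      obtain ⟨u, rfl, hu⟩ : ∃ u, t = s+1+u ∧ u < q.length - (tq+1) :=
        ⟨t - (s+1), by omega, by omega⟩
      rw [hp'high u hu]
      exact leT_max q (show tq < tq+1+u from by omega) (by omega)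
    have hPhi2 : PhiQ v₀ (q', p') = (q, p) := by
      rw [PhiQ_pos hsec', hs'eq, hfind', hAGREE j (le_refl j)]
      have e1 : q'.take (tq + 1) = q.take (tq+1) := by
        rw [hq'def]; exact List.take_left' hlen_take_q
      have e2 : p'.drop (s + 1) = q.drop (tq+1) := by
        rw [hp'def]; exact List.drop_left' hlen_take_p
      have e3 : p'.take (s + 1) = p.take (s+1) := by
        rw [hp'def]; exact List.take_left' hlen_take_p
      have e4 : q'.drop (tq + 1) = p.drop (s+1) := by
        rw [hq'def]; exact List.drop_left' hlen_take_q
      rw [e1, e2, e3, e4, List.take_append_drop, List.take_append_drop]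
    rw [hPhi]
    exact ⟨hq'Stp, hp'Stp, hsec', hPhi2, hwt, hq'last, hp'last,
      show q'.length + p'.length = q.length + p.length from by omega⟩

/-- disconnection implies sector membership -/
lemma disc_to_Sec {A : Finset V} {y x : V} {q p : List V}
    (hq : StpP A v₀ y q) (hwq : Wt m v₀ q ≠ 0) (hpne : p ≠ [])
    (hdisc : ∀ (k : ℕ) (g : Fin (k+1) → V), g 0 = y → g (Fin.last k) ∈ A →
      (∀ i : Fin k, 0 < m (g i.castSucc) (g i.succ)) →
      ∃ i : Fin (k+1), ∃ jj : ℕ, jj ≤ p.length - 1 ∧ p.getD jj v₀ = g i) :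
    Sec v₀ q p := by
  obtain ⟨hqne, hqhead, hqint, hqlast⟩ := hq
  have hlq : 1 ≤ q.length := List.length_pos_iff.mpr hqne
  have hlp : 1 ≤ p.length := List.length_pos_iff.mpr hpne
  obtain ⟨i, jj, hjj, hv⟩ := hdisc (Ix v₀ q) (fun i => q.getD (leT v₀ q i.1) v₀)
    (by simp only [Fin.val_zero]; rw [leT_getD0]; exact hqhead)
    (by simp only [Fin.val_last]; rw [Ix_spec]; exact hqlast)
    (by
      intro i
      simp only [Fin.coe_castSucc, Fin.val_succ]
      have hlt : i.1 < Ix v₀ q := i.isLt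
      have hstep := leT_succ q (Ix_min hlt)
      rw [hstep.2]
      exact Wt_pos_step m v₀ hwq (by have := leT_le (v₀ := v₀) q i.1; have := Ix_min hlt; omega))
  exact ⟨i.1, by have := i.isLt; omega, jj, by omega, hv⟩

/-! ### stopped path sums and the core inequality -/

noncomputable def SPF (A : Finset V) (v₀ z : V) (N : ℕ) : Finset (List V) :=
  ((Finset.range (N+1)).biUnion (Lists V)).filter (fun L => StpP A v₀ z L)

lemma mem_SPF {A : Finset V} {v₀ z : V} {N : ℕ} {L : List V} :
    L ∈ SPF A v₀ z N ↔ L.length ≤ N ∧ StpP A v₀ z L := by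
  simp only [SPF, Finset.mem_filter, Finset.mem_biUnion, Finset.mem_range, mem_Lists]
  constructor
  · rintro ⟨⟨t, ht, rfl⟩, h2⟩
    exact ⟨by omega, h2⟩
  · rintro ⟨h1, h2⟩
    exact ⟨⟨L.length, by omega, rfl⟩, h2⟩

lemma SPF_mono {A : Finset V} {v₀ z : V} {N N' : ℕ} (h : N ≤ N') :
    SPF A v₀ z N ⊆ SPF A v₀ z N' := by
  intro L hL
  rw [mem_SPF] at hL ⊢
  exact ⟨le_trans hL.1 h, hL.2⟩

/-- the disconnection predicate on a stopped path -/
def DiscP (m : V → V → ℕ) (v₀ y : V) (A : Finset V) (p : List V) : Prop :=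
  ∀ (k : ℕ) (g : Fin (k+1) → V), g 0 = y → g (Fin.last k) ∈ A →
    (∀ i : Fin k, 0 < m (g i.castSucc) (g i.succ)) →
    ∃ i : Fin (k+1), ∃ jj : ℕ, jj ≤ p.length - 1 ∧ p.getD jj v₀ = g i

/-- swapping the endpoint indicator through the involution -/
lemma swap_sum {A : Finset V} {y x : V} (S : Set V) (N : ℕ) :
    ∑ qp ∈ (SPF A v₀ y N ×ˢ SPF A v₀ x N).filter
        (fun qp => Sec v₀ qp.1 qp.2 ∧ qp.1.length + qp.2.length ≤ N),
      (Wt m v₀ qp.1 * Wt m v₀ qp.2 *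
        (if qp.2.getD (qp.2.length - 1) v₀ ∈ S then (1:ℝ) else 0))
    = ∑ qp ∈ (SPF A v₀ y N ×ˢ SPF A v₀ x N).filter
        (fun qp => Sec v₀ qp.1 qp.2 ∧ qp.1.length + qp.2.length ≤ N),
      (Wt m v₀ qp.1 * Wt m v₀ qp.2 *
        (if qp.1.getD (qp.1.length - 1) v₀ ∈ S then (1:ℝ) else 0)) := by
  apply Finset.sum_nbij' (i := PhiQ v₀) (j := PhiQ v₀)
  · rintro ⟨q, p⟩ hqp
    rw [Finset.mem_filter, Finset.mem_product] at hqp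
    obtain ⟨⟨hq, hp⟩, hsec, hlen⟩ := hqp
    dsimp only at hq hp hsec hlen
    rw [mem_SPF] at hq hp
    obtain ⟨main1, main2, main3, _, _, _, _, main8⟩ :=
      Phi_main (m := m) (v₀ := v₀) hq.2 hp.2 hsec
    rw [Finset.mem_filter, Finset.mem_product]
    have hl1 : 1 ≤ (PhiQ v₀ (q, p)).1.length := List.length_pos_iff.mpr main1.1
    have hl2 : 1 ≤ (PhiQ v₀ (q, p)).2.length := List.length_pos_iff.mpr main2.1
    refine ⟨⟨?_, ?_⟩, ?_, by omega⟩
    · rw [mem_SPF]; exact ⟨by omega, main1⟩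
    · rw [mem_SPF]; exact ⟨by omega, main2⟩
    · have : ((PhiQ v₀ (q, p)).1, (PhiQ v₀ (q, p)).2) = PhiQ v₀ (q, p) := rfl
      rw [← this] at main3 ⊢
      exact main3
  · rintro ⟨q, p⟩ hqp
    rw [Finset.mem_filter, Finset.mem_product] at hqp
    obtain ⟨⟨hq, hp⟩, hsec, hlen⟩ := hqp
    dsimp only at hq hp hsec hlen
    rw [mem_SPF] at hq hp
    obtain ⟨main1, main2, main3, _, _, _, _, main8⟩ :=
      Phi_main (m := m) (v₀ := v₀) hq.2 hp.2 hsec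
    rw [Finset.mem_filter, Finset.mem_product]
    have hl1 : 1 ≤ (PhiQ v₀ (q, p)).1.length := List.length_pos_iff.mpr main1.1
    have hl2 : 1 ≤ (PhiQ v₀ (q, p)).2.length := List.length_pos_iff.mpr main2.1
    refine ⟨⟨?_, ?_⟩, ?_, by omega⟩
    · rw [mem_SPF]; exact ⟨by omega, main1⟩
    · rw [mem_SPF]; exact ⟨by omega, main2⟩
    · exact main3
  · rintro ⟨q, p⟩ hqp
    rw [Finset.mem_filter, Finset.mem_product] at hqp
    obtain ⟨⟨hq, hp⟩, hsec, hlen⟩ := hqp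
    dsimp only at hq hp hsec hlen
    rw [mem_SPF] at hq hp
    obtain ⟨_, _, _, main4, _, _, _, _⟩ := Phi_main (m := m) (v₀ := v₀) hq.2 hp.2 hsec
    exact main4
  · rintro ⟨q, p⟩ hqp
    rw [Finset.mem_filter, Finset.mem_product] at hqp
    obtain ⟨⟨hq, hp⟩, hsec, hlen⟩ := hqp
    dsimp only at hq hp hsec hlen
    rw [mem_SPF] at hq hp
    obtain ⟨_, _, _, main4, _, _, _, _⟩ := Phi_main (m := m) (v₀ := v₀) hq.2 hp.2 hsec
    exact main4
  · rintro ⟨q, p⟩ hqp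
    rw [Finset.mem_filter, Finset.mem_product] at hqp
    obtain ⟨⟨hq, hp⟩, hsec, hlen⟩ := hqp
    dsimp only at hq hp hsec hlen
    rw [mem_SPF] at hq hp
    obtain ⟨_, _, _, _, main5, main6, _, _⟩ := Phi_main (m := m) (v₀ := v₀) hq.2 hp.2 hsec
    rw [main5, main6]

lemma core_ineq {A : Finset V} {y x : V} (S : Set V) (N : ℕ)
    (haU1 : ∑ L ∈ SPF A v₀ x N, Wt m v₀ L ≤ 1)
    (haU2 : ∑ L ∈ SPF A v₀ x (2*N), Wt m v₀ L ≤ 1)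
    (hbU1 : ∑ L ∈ SPF A v₀ y N, Wt m v₀ L ≤ 1) :
    (∑ L ∈ SPF A v₀ x N, if L.getD (L.length - 1) v₀ ∈ S then Wt m v₀ L else 0)
      + (∑ L ∈ SPF A v₀ x N, if DiscP m v₀ y A L then Wt m v₀ L else 0)
    ≤ 1 + (∑ L ∈ SPF A v₀ y (2*N), if L.getD (L.length - 1) v₀ ∈ S then Wt m v₀ L else 0)
      + (1 - ∑ L ∈ SPF A v₀ y N, Wt m v₀ L) := by
  set aS := ∑ L ∈ SPF A v₀ x N, if L.getD (L.length - 1) v₀ ∈ S then Wt m v₀ L else 0 with haS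
  set eD := ∑ L ∈ SPF A v₀ x N, if DiscP m v₀ y A L then Wt m v₀ L else 0 with heD
  set bS2 := ∑ L ∈ SPF A v₀ y (2*N), if L.getD (L.length - 1) v₀ ∈ S then Wt m v₀ L else 0
    with hbS2
  set bU := ∑ L ∈ SPF A v₀ y N, Wt m v₀ L with hbU
  set aU := ∑ L ∈ SPF A v₀ x N, Wt m v₀ L with haU
  have hite_le : ∀ (P : Prop) (w : ℝ), 0 ≤ w → (if P then w else 0) ≤ w := by
    intro P w hw; split <;> simp [hw]
  have hite_nonneg : ∀ (P : Prop) (w : ℝ), 0 ≤ w → 0 ≤ (if P then w else 0) := by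
    intro P w hw; split <;> simp [hw]
  have haS_le_aU : aS ≤ aU :=
    Finset.sum_le_sum (fun L _ => hite_le _ _ (Wt_nonneg m v₀ L))
  have heD_le_aU : eD ≤ aU :=
    Finset.sum_le_sum (fun L _ => hite_le _ _ (Wt_nonneg m v₀ L))
  have hbU0 : 0 ≤ bU := Finset.sum_nonneg (fun L _ => Wt_nonneg m v₀ L)
  have haS0 : 0 ≤ aS := Finset.sum_nonneg (fun L _ => hite_nonneg _ _ (Wt_nonneg m v₀ L))
  have hbS20 : 0 ≤ bS2 := Finset.sum_nonneg (fun L _ => hite_nonneg _ _ (Wt_nonneg m v₀ L))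
  set g2 : List V × List V → ℝ := fun qp => Wt m v₀ qp.1 * Wt m v₀ qp.2 *
    (if qp.2.getD (qp.2.length - 1) v₀ ∈ S then (1:ℝ) else 0) with hg2
  set g1 : List V × List V → ℝ := fun qp => Wt m v₀ qp.1 * Wt m v₀ qp.2 *
    (if qp.1.getD (qp.1.length - 1) v₀ ∈ S then (1:ℝ) else 0) with hg1
  set gd : List V × List V → ℝ := fun qp => Wt m v₀ qp.1 * Wt m v₀ qp.2 *
    (if DiscP m v₀ y A qp.2 then (0:ℝ) else 1) with hgd
  have hg2_nonneg : ∀ qp, 0 ≤ g2 qp := by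
    intro qp
    apply mul_nonneg (mul_nonneg (Wt_nonneg _ _ _) (Wt_nonneg _ _ _))
    split <;> norm_num
  have hg1_nonneg : ∀ qp, 0 ≤ g1 qp := by
    intro qp
    apply mul_nonneg (mul_nonneg (Wt_nonneg _ _ _) (Wt_nonneg _ _ _))
    split <;> norm_num
  have hgd_nonneg : ∀ qp, 0 ≤ gd qp := by
    intro qp
    apply mul_nonneg (mul_nonneg (Wt_nonneg _ _ _) (Wt_nonneg _ _ _))
    split <;> norm_num
  set F := (SPF A v₀ y N) ×ˢ (SPF A v₀ x N) with hF
  set Pair2 := ((SPF A v₀ y (2*N)) ×ˢ (SPF A v₀ x (2*N))).filter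
    (fun qp => Sec v₀ qp.1 qp.2 ∧ qp.1.length + qp.2.length ≤ 2*N) with hPair2
  have hprod : bU * aS = ∑ qp ∈ F, g2 qp := by
    rw [hF, Finset.sum_product, hbU, haS, Finset.sum_mul_sum]
    apply Finset.sum_congr rfl
    intro q _
    apply Finset.sum_congr rfl
    intro p _
    rw [hg2]
    dsimp only
    split <;> ring
  have hsplitF : ∑ qp ∈ F, g2 qp = ∑ qp ∈ F.filter (fun qp => Sec v₀ qp.1 qp.2), g2 qp
      + ∑ qp ∈ F.filter (fun qp => ¬ Sec v₀ qp.1 qp.2), g2 qp :=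
    (Finset.sum_filter_add_sum_filter_not F _ g2).symm
  have hsub : F.filter (fun qp => Sec v₀ qp.1 qp.2) ⊆ Pair2 := by
    intro qp hqp
    rw [Finset.mem_filter, hF, Finset.mem_product] at hqp
    obtain ⟨⟨hq, hp⟩, hsec⟩ := hqp
    rw [mem_SPF] at hq hp
    rw [hPair2, Finset.mem_filter, Finset.mem_product]
    refine ⟨⟨?_, ?_⟩, hsec, by omega⟩
    · rw [mem_SPF]; exact ⟨by omega, hq.2⟩
    · rw [mem_SPF]; exact ⟨by omega, hp.2⟩
  have h3 : ∑ qp ∈ F.filter (fun qp => Sec v₀ qp.1 qp.2), g2 qp ≤ ∑ qp ∈ Pair2, g2 qp :=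
    Finset.sum_le_sum_of_subset_of_nonneg hsub (fun qp _ _ => hg2_nonneg qp)
  have h4 : ∑ qp ∈ Pair2, g2 qp = ∑ qp ∈ Pair2, g1 qp := swap_sum S (2*N)
  have h5 : ∑ qp ∈ Pair2, g1 qp ≤ bS2 := by
    calc ∑ qp ∈ Pair2, g1 qp
        ≤ ∑ qp ∈ (SPF A v₀ y (2*N)) ×ˢ (SPF A v₀ x (2*N)), g1 qp :=
          Finset.sum_le_sum_of_subset_of_nonneg (Finset.filter_subset _ _)
            (fun qp _ _ => hg1_nonneg qp)
      _ = bS2 * (∑ L ∈ SPF A v₀ x (2*N), Wt m v₀ L) := by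
          rw [Finset.sum_product, hbS2, Finset.sum_mul_sum]
          apply Finset.sum_congr rfl
          intro q _
          apply Finset.sum_congr rfl
          intro p _
          rw [hg1]
          dsimp only
          split <;> ring
      _ ≤ bS2 := mul_le_of_le_one_right hbS20 haU2
  have h6 : ∑ qp ∈ F.filter (fun qp => ¬ Sec v₀ qp.1 qp.2), g2 qp ≤ ∑ qp ∈ F, gd qp := by
    calc ∑ qp ∈ F.filter (fun qp => ¬ Sec v₀ qp.1 qp.2), g2 qp
        ≤ ∑ qp ∈ F.filter (fun qp => ¬ Sec v₀ qp.1 qp.2), gd qp := by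
          apply Finset.sum_le_sum
          intro qp hqp
          rw [Finset.mem_filter, hF, Finset.mem_product] at hqp
          obtain ⟨⟨hq, hp⟩, hnsec⟩ := hqp
          rw [mem_SPF] at hq hp
          rw [hg2, hgd]
          dsimp only
          by_cases hdisc : DiscP m v₀ y A qp.2
          · rw [if_pos hdisc]
            by_cases hw : Wt m v₀ qp.1 = 0
            · simp [hw]
            · exfalso
              apply hnsec
              exact disc_to_Sec (x := x) hq.2 hw hp.2.1 hdisc
          · rw [if_neg hdisc, mul_one]
            calc Wt m v₀ qp.1 * Wt m v₀ qp.2 * _ ≤ Wt m v₀ qp.1 * Wt m v₀ qp.2 * 1 := by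
                  apply mul_le_mul_of_nonneg_left _ (mul_nonneg (Wt_nonneg _ _ _) (Wt_nonneg _ _ _))
                  split <;> norm_num
              _ = Wt m v₀ qp.1 * Wt m v₀ qp.2 := mul_one _
      _ ≤ ∑ qp ∈ F, gd qp :=
          Finset.sum_le_sum_of_subset_of_nonneg (Finset.filter_subset _ _)
            (fun qp _ _ => hgd_nonneg qp)
  have h7 : ∑ qp ∈ F, gd qp ≤ aU - eD := by
    have heq : ∑ qp ∈ F, gd qp = bU * (aU - eD) := by
      rw [hF, Finset.sum_product]
      have inner : ∀ q, ∑ p ∈ SPF A v₀ x N, gd (q, p) = Wt m v₀ q * (aU - eD) := by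
        intro q
        rw [haU, heD, ← Finset.sum_sub_distrib, Finset.mul_sum]
        apply Finset.sum_congr rfl
        intro p _
        rw [hgd]
        dsimp only
        by_cases hdp : DiscP m v₀ y A p
        · rw [if_pos hdp, if_pos hdp]; ring
        · rw [if_neg hdp, if_neg hdp]; ring
      calc ∑ q ∈ SPF A v₀ y N, ∑ p ∈ SPF A v₀ x N, gd (q, p)
          = ∑ q ∈ SPF A v₀ y N, Wt m v₀ q * (aU - eD) :=
            Finset.sum_congr rfl (fun q _ => inner q)
        _ = bU * (aU - eD) := by rw [hbU, Finset.sum_mul]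
    rw [heq]
    have hsub0 : 0 ≤ aU - eD := by linarith
    calc bU * (aU - eD) ≤ 1 * (aU - eD) := mul_le_mul_of_nonneg_right hbU1 hsub0
      _ = aU - eD := one_mul _
  have hmain : bU * aS ≤ bS2 + (aU - eD) := by
    rw [hprod, hsplitF]
    have hA := (h3.trans (le_of_eq h4)).trans h5
    linarith [h6.trans h7]
  have haS1 : aS ≤ 1 := haS_le_aU.trans haU1
  have hfact : 0 ≤ (1 - bU) * (1 - aS) := mul_nonneg (by linarith) (by linarith)
  have hfact' : 0 ≤ 1 - bU - aS + bU * aS := by nlinarith [hfact]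
  linarith [hmain, haU1, hfact']

/-! ### the bridge between full-length sums and stopped-path sums -/

def FirstHit (A : Finset V) (v₀ : V) (M : List V) (t : ℕ) : Prop :=
  t < M.length ∧ M.getD t v₀ ∈ A ∧ ∀ i < t, M.getD i v₀ ∉ A

lemma FirstHit_unique {A : Finset V} {M : List V} {t t' : ℕ}
    (h : FirstHit A v₀ M t) (h' : FirstHit A v₀ M t') : t = t' := by
  by_contra hne
  rcases lt_or_gt_of_ne hne with hlt | hlt
  · exact h'.2.2 t hlt h.2.1
  · exact h.2.2 t' hlt h'.2.1

lemma bridge (hd : ∀ v, 0 < dg m v) {A : Finset V} {z : V} (Q : List V → Prop)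
    (N : ℕ) :
    ∑ M ∈ Lists V N, (if (M.getD 0 v₀ = z ∧ ∃ t, FirstHit A v₀ M t ∧ Q (M.take (t+1)))
        then Wt m v₀ M else 0)
    = ∑ L ∈ SPF A v₀ z N, (if Q L then Wt m v₀ L else 0) := by
  rw [← Finset.sum_filter, ← Finset.sum_filter]
  have hset : (Lists V N).filter
      (fun M => M.getD 0 v₀ = z ∧ ∃ t, FirstHit A v₀ M t ∧ Q (M.take (t+1)))
      = ((SPF A v₀ z N).filter Q).biUnion
          (fun L => (Lists V (N - L.length)).image (fun K => L ++ K)) := by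
    ext M
    simp only [Finset.mem_filter, Finset.mem_biUnion, Finset.mem_image, mem_Lists, mem_SPF]
    constructor
    · rintro ⟨hlen, hhead, t, ⟨ht1, ht2, ht3⟩, hQ⟩
      refine ⟨M.take (t+1), ⟨⟨?_, ?_, ?_, ?_, ?_⟩, hQ⟩, M.drop (t+1), ?_, ?_⟩
      · rw [List.length_take]; omega
      · have : 0 < (M.take (t+1)).length := by rw [List.length_take]; omega
        exact List.length_pos_iff.mp this
      · rw [getD_take' _ _ _ (by omega) (by omega)]; exact hhead
      · intro i hi
        have hlt : (M.take (t+1)).length = t+1 := by rw [List.length_take]; omega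
        rw [hlt] at hi
        rw [getD_take' _ _ _ (by omega) (by omega)]
        exact ht3 i (by omega)
      · have hlt : (M.take (t+1)).length = t+1 := by rw [List.length_take]; omega
        rw [hlt, Nat.add_sub_cancel, getD_take' _ _ _ (by omega) (by omega)]
        exact ht2
      · rw [List.length_drop, List.length_take]; omega
      · exact List.take_append_drop _ M
    · rintro ⟨L, ⟨⟨hLlen, hLne, hLhead, hLint, hLlast⟩, hQ⟩, K, hKlen, rfl⟩
      have hLpos : 1 ≤ L.length := List.length_pos_iff.mpr hLne
      have hlenM : (L ++ K).length = N := by rw [List.length_append]; omega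
      have htake : (L ++ K).take L.length = L := List.take_left
      refine ⟨hlenM, ?_, L.length - 1, ⟨by omega, ?_, ?_⟩, ?_⟩
      · rw [List.getD_append _ _ _ _ (by omega)]; exact hLhead
      · rw [List.getD_append _ _ _ _ (by omega)]; exact hLlast
      · intro i hi
        rw [List.getD_append _ _ _ _ (by omega)]
        exact hLint i (by omega)
      · rw [show L.length - 1 + 1 = L.length from by omega, htake]
        exact hQ
  rw [hset, Finset.sum_biUnion, ]
  · apply Finset.sum_congr rfl
    intro L hL
    rw [Finset.mem_filter, mem_SPF] at hL
    rw [Finset.sum_image (by intro a _ b _ h; exact List.append_cancel_left h)]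
    exact EXT hd hL.1.2.1 _
  · -- pairwise disjoint
    intro L1 h1 L2 h2 hne
    simp only [Finset.mem_coe, Finset.mem_filter, mem_SPF] at h1 h2
    intro Fs hF1 hF2 M hM
    exfalso
    have hM1 := hF1 hM
    have hM2 := hF2 hM
    simp only [Finset.mem_image, mem_Lists] at hM1 hM2
    obtain ⟨K1, hK1, hMK1⟩ := hM1
    obtain ⟨K2, hK2, hMK2⟩ := hM2
    apply hne
    have hL1pos : 1 ≤ L1.length := List.length_pos_iff.mpr h1.1.2.1
    have hL2pos : 1 ≤ L2.length := List.length_pos_iff.mpr h2.1.2.1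
    have hfh1 : FirstHit A v₀ M (L1.length - 1) := by
      subst hMK1
      refine ⟨by rw [List.length_append]; omega, ?_, ?_⟩
      · rw [List.getD_append _ _ _ _ (by omega)]; exact h1.1.2.2.2.2
      · intro i hi
        rw [List.getD_append _ _ _ _ (by omega)]
        exact h1.1.2.2.2.1 i (by omega)
    have hfh2 : FirstHit A v₀ M (L2.length - 1) := by
      subst hMK2
      refine ⟨by rw [List.length_append]; omega, ?_, ?_⟩
      · rw [List.getD_append _ _ _ _ (by omega)]; exact h2.1.2.2.2.2
      · intro i hi
        rw [List.getD_append _ _ _ _ (by omega)]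
        exact h2.1.2.2.2.1 i (by omega)
    have hlen12 : L1.length = L2.length := by
      have := FirstHit_unique hfh1 hfh2
      omega
    calc L1 = M.take L1.length := by rw [← hMK1]; exact List.take_left.symm
      _ = M.take L2.length := by rw [hlen12]
      _ = L2 := by rw [← hMK2]; exact List.take_left

/-! ### measure interface -/

section Measure
open MeasureTheory

variable {Ω : Type*} [MeasurableSpace Ω]

def Cyl (X : Ω → ℕ → V) (v₀ : V) (M : List V) : Set Ω :=
  {ω | ∀ i, i < M.length → X ω i = M.getD i v₀}

def trajL (X : Ω → ℕ → V) (ω : Ω) (N : ℕ) : List V := List.ofFn (fun i : Fin N => X ω i.1)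

lemma trajL_length (X : Ω → ℕ → V) (ω : Ω) (N : ℕ) : (trajL X ω N).length = N := by
  simp [trajL]

lemma trajL_getD (X : Ω → ℕ → V) (ω : Ω) {N i : ℕ} (hi : i < N) :
    (trajL X ω N).getD i v₀ = X ω i := by
  rw [trajL, List.getD_eq_getElem _ _ (by simp [hi]), List.getElem_ofFn]

lemma mem_Cyl_trajL (X : Ω → ℕ → V) (ω : Ω) (N : ℕ) : ω ∈ Cyl X v₀ (trajL X ω N) := by
  intro i hi
  rw [trajL_length] at hi
  rw [trajL_getD X ω hi]

lemma trajL_mem_Lists (X : Ω → ℕ → V) (ω : Ω) (N : ℕ) : trajL X ω N ∈ Lists V N :=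
  mem_Lists.mpr (trajL_length X ω N)

lemma take_last_getD (M : List V) {t : ℕ} (ht : t < M.length) :
    (M.take (t+1)).getD ((M.take (t+1)).length - 1) v₀ = M.getD t v₀ := by
  have hlt : (M.take (t+1)).length = t+1 := by rw [List.length_take]; omega
  rw [hlt, Nat.add_sub_cancel, getD_take' _ _ _ (by omega) (by omega)]

variable (P : Measure Ω) [IsProbabilityMeasure P] (X : Ω → ℕ → V) {z : V}

lemma cyl_toReal
    (hXz : ∀ (n : ℕ) (path : Fin (n + 1) → V),
      (P {ω | ∀ i : Fin (n + 1), X ω i.1 = path i}).toReal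
        = (if path 0 = z then 1 else 0)
          * ∏ i : Fin n, (m (path i.castSucc) (path i.succ) : ℝ)
              / ∑ w, (m (path i.castSucc) w : ℝ))
    {M : List V} (hM : 1 ≤ M.length) :
    (P (Cyl X v₀ M)).toReal = (if M.getD 0 v₀ = z then 1 else 0) * Wt m v₀ M := by
  have hn : M.length = (M.length - 1) + 1 := by omega
  have hXn := hXz (M.length - 1) (fun i => M.getD i.1 v₀)
  have hev : {ω | ∀ i : Fin (M.length - 1 + 1), X ω i.1 = M.getD i.1 v₀} = Cyl X v₀ M := by
    ext ω
    simp only [Set.mem_setOf_eq, Cyl]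
    constructor
    · intro h i hi
      exact h ⟨i, by omega⟩
    · intro h i
      exact h i.1 (by have := i.isLt; omega)
  rw [hev] at hXn
  rw [hXn]
  congr 1
  rw [Wt, ← Fin.prod_univ_eq_prod_range
    (f := fun k => stp m (M.getD k v₀) (M.getD (k+1) v₀)) (M.length - 1)]
  apply Finset.prod_congr rfl
  intro i _
  simp only [Fin.coe_castSucc, Fin.val_succ]
  rfl

lemma Total_one (hd : ∀ v, 0 < dg m v) (z : V) {N : ℕ} (hN : 1 ≤ N) :
    ∑ M ∈ Lists V N, (if M.getD 0 v₀ = z then Wt m v₀ M else 0) = 1 := by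
  obtain ⟨T, rfl⟩ : ∃ T, N = T + 1 := ⟨N - 1, by omega⟩
  rw [sum_Lists_succ]
  rw [Finset.sum_eq_single z]
  · simp only [List.getD_cons_zero, if_pos rfl]
    exact TOT hd T z
  · intro v _ hv
    apply Finset.sum_eq_zero
    intro K _
    simp [List.getD_cons_zero, hv]
  · intro h
    exact absurd (Finset.mem_univ z) h

lemma FullSum_NoA_eq_Av {A : Finset V} (z : V) (T : ℕ) :
    ∑ M ∈ Lists V (T+1), (if (M.getD 0 v₀ = z ∧ NoA A M) then Wt m v₀ M else 0)
      = Av m v₀ A z T := by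
  rw [sum_Lists_succ, Finset.sum_eq_single z]
  · rw [Av]
    apply Finset.sum_congr rfl
    intro K _
    simp only [List.getD_cons_zero, true_and]
  · intro v _ hv
    apply Finset.sum_eq_zero
    intro K _
    simp [List.getD_cons_zero, hv]
  · intro h
    exact absurd (Finset.mem_univ z) h

lemma sandwich_low (hd : ∀ v, 0 < dg m v)
    (hXz : ∀ (n : ℕ) (path : Fin (n + 1) → V),
      (P {ω | ∀ i : Fin (n + 1), X ω i.1 = path i}).toReal
        = (if path 0 = z then 1 else 0)
          * ∏ i : Fin n, (m (path i.castSucc) (path i.succ) : ℝ)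
              / ∑ w, (m (path i.castSucc) w : ℝ))
    (R : List V → Prop) {N : ℕ} (hN : 1 ≤ N) (Z : Set Ω)
    (hsub : ∀ M ∈ Lists V N, M.getD 0 v₀ = z → R M → Cyl X v₀ M ⊆ Z) :
    ∑ M ∈ Lists V N, (if (M.getD 0 v₀ = z ∧ R M) then Wt m v₀ M else 0) ≤ (P Z).toReal := by
  classical
  set Gc := (Lists V N).filter (fun M => ¬ (M.getD 0 v₀ = z ∧ R M)) with hGc
  have hcover : (Set.univ : Set Ω) ⊆ Z ∪ ⋃ M ∈ Gc, Cyl X v₀ M := by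
    intro ω _
    by_cases hM : (trajL X ω N).getD 0 v₀ = z ∧ R (trajL X ω N)
    · left
      exact hsub _ (trajL_mem_Lists X ω N) hM.1 hM.2 (mem_Cyl_trajL X ω N)
    · right
      have hmem : trajL X ω N ∈ Gc := by
        rw [hGc, Finset.mem_filter]
        exact ⟨trajL_mem_Lists X ω N, hM⟩
      exact Set.mem_iUnion₂.mpr ⟨trajL X ω N, hmem, mem_Cyl_trajL X ω N⟩
  have h1 : (1:ENNReal) ≤ P Z + ∑ M ∈ Gc, P (Cyl X v₀ M) := by
    calc (1:ENNReal) = P Set.univ := measure_univ.symm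
      _ ≤ P (Z ∪ ⋃ M ∈ Gc, Cyl X v₀ M) := measure_mono hcover
      _ ≤ P Z + P (⋃ M ∈ Gc, Cyl X v₀ M) := measure_union_le _ _
      _ ≤ P Z + ∑ M ∈ Gc, P (Cyl X v₀ M) := by
          gcongr
          exact measure_biUnion_finset_le (μ := P) Gc _
  have hsumne : ∑ M ∈ Gc, P (Cyl X v₀ M) ≠ ⊤ := by
    rw [ENNReal.sum_ne_top]
    intro M _
    exact measure_ne_top P _
  have hfin : P Z + ∑ M ∈ Gc, P (Cyl X v₀ M) ≠ ⊤ :=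
    ENNReal.add_ne_top.mpr ⟨measure_ne_top P Z, hsumne⟩
  have h2 : (1:ℝ) ≤ (P Z).toReal + ∑ M ∈ Gc, (P (Cyl X v₀ M)).toReal := by
    have h := ENNReal.toReal_mono hfin h1
    rw [ENNReal.toReal_add (measure_ne_top P Z) hsumne, ENNReal.toReal_sum
      (fun M _ => measure_ne_top P _)] at h
    simpa using h
  have h3 : ∑ M ∈ Gc, (P (Cyl X v₀ M)).toReal
      = ∑ M ∈ Gc, (if M.getD 0 v₀ = z then 1 else 0) * Wt m v₀ M := by
    apply Finset.sum_congr rfl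
    intro M hM
    rw [hGc, Finset.mem_filter, mem_Lists] at hM
    exact cyl_toReal P X hXz (by omega)
  have h4 : ∑ M ∈ Gc, (if M.getD 0 v₀ = z then 1 else 0) * Wt m v₀ M
      + ∑ M ∈ Lists V N, (if (M.getD 0 v₀ = z ∧ R M) then Wt m v₀ M else 0) = 1 := by
    rw [hGc, Finset.sum_filter, ← Finset.sum_add_distrib]
    have hpt : ∀ M ∈ Lists V N,
        ((if ¬(M.getD 0 v₀ = z ∧ R M)
            then (if M.getD 0 v₀ = z then (1:ℝ) else 0) * Wt m v₀ M else 0)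
          + (if (M.getD 0 v₀ = z ∧ R M) then Wt m v₀ M else 0))
        = (if M.getD 0 v₀ = z then Wt m v₀ M else 0) := by
      intro M _
      by_cases hh : M.getD 0 v₀ = z
      · by_cases hr : R M
        · rw [if_neg (not_not_intro (⟨hh, hr⟩ : M.getD 0 v₀ = z ∧ R M)),
            if_pos (⟨hh, hr⟩ : M.getD 0 v₀ = z ∧ R M), if_pos hh, zero_add]
        · rw [if_pos (show ¬(M.getD 0 v₀ = z ∧ R M) from fun hc => hr hc.2),
            if_neg (show ¬(M.getD 0 v₀ = z ∧ R M) from fun hc => hr hc.2),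
            if_pos hh, if_pos hh]
          ring
      · rw [if_pos (show ¬(M.getD 0 v₀ = z ∧ R M) from fun hc => hh hc.1),
          if_neg (show ¬(M.getD 0 v₀ = z ∧ R M) from fun hc => hh hc.1),
          if_neg hh, if_neg hh]
        ring
    rw [Finset.sum_congr rfl hpt, Total_one hd z hN]
  linarith [h2, h3, h4]

lemma sandwich_up (hd : ∀ v, 0 < dg m v)
    (hXz : ∀ (n : ℕ) (path : Fin (n + 1) → V),
      (P {ω | ∀ i : Fin (n + 1), X ω i.1 = path i}).toReal
        = (if path 0 = z then 1 else 0)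
          * ∏ i : Fin n, (m (path i.castSucc) (path i.succ) : ℝ)
              / ∑ w, (m (path i.castSucc) w : ℝ))
    {A : Finset V} (R : List V → Prop) (T : ℕ) (Z : Set Ω)
    (hZ : ∀ ω ∈ Z, R (trajL X ω (T+1)) ∨ NoA A (trajL X ω (T+1))) :
    (P Z).toReal ≤
      (∑ M ∈ Lists V (T+1), (if (M.getD 0 v₀ = z ∧ R M) then Wt m v₀ M else 0))
        + Av m v₀ A z T := by
  classical
  set G := (Lists V (T+1)).filter
    (fun M => (M.getD 0 v₀ = z ∧ (R M ∨ NoA A M)) ∨ ¬ (M.getD 0 v₀ = z)) with hG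
  have hcover : Z ⊆ ⋃ M ∈ G, Cyl X v₀ M := by
    intro ω hω
    have hmem : trajL X ω (T+1) ∈ G := by
      rw [hG, Finset.mem_filter]
      refine ⟨trajL_mem_Lists X ω (T+1), ?_⟩
      by_cases hh : (trajL X ω (T+1)).getD 0 v₀ = z
      · exact Or.inl ⟨hh, hZ ω hω⟩
      · exact Or.inr hh
    exact Set.mem_iUnion₂.mpr ⟨trajL X ω (T+1), hmem, mem_Cyl_trajL X ω (T+1)⟩
  have h1 : P Z ≤ ∑ M ∈ G, P (Cyl X v₀ M) :=
    le_trans (measure_mono hcover) (measure_biUnion_finset_le (μ := P) G _)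
  have hsumne : ∑ M ∈ G, P (Cyl X v₀ M) ≠ ⊤ := by
    rw [ENNReal.sum_ne_top]
    intro M _
    exact measure_ne_top P _
  have h2 : (P Z).toReal ≤ ∑ M ∈ G, (P (Cyl X v₀ M)).toReal := by
    have h := ENNReal.toReal_mono hsumne h1
    rwa [ENNReal.toReal_sum (fun M _ => measure_ne_top P _)] at h
  have h3 : ∑ M ∈ G, (P (Cyl X v₀ M)).toReal
      = ∑ M ∈ G, (if M.getD 0 v₀ = z then 1 else 0) * Wt m v₀ M := by
    apply Finset.sum_congr rfl
    intro M hM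
    rw [hG, Finset.mem_filter, mem_Lists] at hM
    exact cyl_toReal P X hXz (by omega)
  have h4 : ∑ M ∈ G, (if M.getD 0 v₀ = z then 1 else 0) * Wt m v₀ M
      ≤ (∑ M ∈ Lists V (T+1), (if (M.getD 0 v₀ = z ∧ R M) then Wt m v₀ M else 0))
        + ∑ M ∈ Lists V (T+1), (if (M.getD 0 v₀ = z ∧ NoA A M) then Wt m v₀ M else 0) := by
    rw [← Finset.sum_add_distrib]
    calc ∑ M ∈ G, (if M.getD 0 v₀ = z then 1 else 0) * Wt m v₀ M
        ≤ ∑ M ∈ G, ((if (M.getD 0 v₀ = z ∧ R M) then Wt m v₀ M else 0)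
            + (if (M.getD 0 v₀ = z ∧ NoA A M) then Wt m v₀ M else 0)) := by
          apply Finset.sum_le_sum
          intro M hM
          rw [hG, Finset.mem_filter] at hM
          rcases hM.2 with ⟨hh, hRN⟩ | hh
          · rcases hRN with hr | hn
            · rw [if_pos hh, if_pos (⟨hh, hr⟩ : M.getD 0 v₀ = z ∧ R M), one_mul]
              have : (0:ℝ) ≤ (if (M.getD 0 v₀ = z ∧ NoA A M) then Wt m v₀ M else 0) := by
                split <;> simp [Wt_nonneg]
              linarith
            · rw [if_pos hh, if_pos (⟨hh, hn⟩ : M.getD 0 v₀ = z ∧ NoA A M), one_mul]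
              have : (0:ℝ) ≤ (if (M.getD 0 v₀ = z ∧ R M) then Wt m v₀ M else 0) := by
                split <;> simp [Wt_nonneg]
              linarith
          · rw [if_neg hh, zero_mul]
            have h5 : (0:ℝ) ≤ (if (M.getD 0 v₀ = z ∧ R M) then Wt m v₀ M else 0) := by
              split <;> simp [Wt_nonneg]
            have h6 : (0:ℝ) ≤ (if (M.getD 0 v₀ = z ∧ NoA A M) then Wt m v₀ M else 0) := by
              split <;> simp [Wt_nonneg]
            linarith
      _ ≤ _ := by
          apply Finset.sum_le_sum_of_subset_of_nonneg (Finset.filter_subset _ _)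
          intro M _ _
          have h5 : (0:ℝ) ≤ (if (M.getD 0 v₀ = z ∧ R M) then Wt m v₀ M else 0) := by
            split <;> simp [Wt_nonneg]
          have h6 : (0:ℝ) ≤ (if (M.getD 0 v₀ = z ∧ NoA A M) then Wt m v₀ M else 0) := by
            split <;> simp [Wt_nonneg]
          linarith
  rw [FullSum_NoA_eq_Av] at h4
  linarith [h2, h3, h4]

end Measure

end TVW

open MeasureTheory TVW

theorem tv_bound_via_disconnection
    {V : Type*} [Fintype V] [DecidableEq V]
    {Ω : Type*} [MeasurableSpace Ω] (P : Measure Ω) [IsProbabilityMeasure P]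
    (m : V → V → ℕ) (hsymm : ∀ x y, m x y = m y x)
    (hconn : ∀ x y : V, Relation.ReflTransGen (fun a b => 0 < m a b) x y)
    (A : Finset V) (hA : A.Nonempty)
    (X : V → Ω → ℕ → V)
    (hX : ∀ (x : V) (n : ℕ) (path : Fin (n + 1) → V),
      (P {ω | ∀ i : Fin (n + 1), X x ω i.1 = path i}).toReal
        = (if path 0 = x then 1 else 0)
          * ∏ i : Fin n, (m (path i.castSucc) (path i.succ) : ℝ)
              / ∑ z, (m (path i.castSucc) z : ℝ))
    (x y : V) (hx : x ∉ A) (hy : y ∉ A) :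
    (⨆ S : Set V,
        |(P {ω | X x ω (sInf {n | X x ω n ∈ A}) ∈ S}).toReal
          - (P {ω | X y ω (sInf {n | X y ω n ∈ A}) ∈ S}).toReal|)
      ≤ 1 - (P {ω | ∀ (k : ℕ) (q : Fin (k + 1) → V), q 0 = y → q (Fin.last k) ∈ A →
            (∀ i : Fin k, 0 < m (q i.castSucc) (q i.succ)) →
            ∃ i : Fin (k + 1), ∃ j : ℕ,
              j ≤ sInf {n | X x ω n ∈ A} ∧ X x ω j = q i}).toReal := by
  classical
  obtain ⟨a₀, ha₀⟩ := hA
  haveI : Nonempty V := ⟨a₀⟩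
  set v₀ : V := a₀ with hv₀
  -- positivity of degrees
  have hd : ∀ v, 0 < dg m v := by
    intro v
    have hstep : ∃ w, 0 < m v w := by
      by_cases hva : v = a₀
      · rcases (Relation.ReflTransGen.cases_head (hconn v x)) with heq | ⟨c, hvc, _⟩
        · exfalso; apply hx; rw [← heq, hva]; exact ha₀
        · exact ⟨c, hvc⟩
      · rcases (Relation.ReflTransGen.cases_head (hconn v a₀)) with heq | ⟨c, hvc, _⟩
        · exact absurd heq hva
        · exact ⟨c, hvc⟩
    obtain ⟨w, hw⟩ := hstep
    have h1 : (0:ℝ) < (m v w : ℝ) := by exact_mod_cast hw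
    have h2 : (m v w : ℝ) ≤ dg m v :=
      Finset.single_le_sum (f := fun u => (m v u : ℝ)) (fun i _ => by positivity)
        (Finset.mem_univ w)
    linarith
  -- chains to A
  have hchain : ∀ v : V, ∃ C : List V, C ≠ [] ∧ C.getD 0 v₀ = v ∧
      (∃ i < C.length, C.getD i v₀ ∈ A) ∧ 0 < Wt m v₀ C := by
    intro v
    obtain ⟨C, hne, h0, hl, hstep⟩ := RTG_list (v₀ := v₀) (hconn v a₀)
    have hCpos : 1 ≤ C.length := List.length_pos_iff.mpr hne
    refine ⟨C, hne, h0, ⟨C.length - 1, by omega, hl ▸ ha₀⟩, ?_⟩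
    rw [Wt]
    apply Finset.prod_pos
    intro i hi
    rw [Finset.mem_range] at hi
    have := hstep i (by omega)
    rw [stp]
    apply div_pos (by exact_mod_cast this) (hd _)
  choose Cf hCne hC0 hCA hCw using hchain
  set T₀ := Finset.univ.sup (fun v => (Cf v).length) with hT₀
  set ε := Finset.univ.inf' Finset.univ_nonempty (fun v => Wt m v₀ (Cf v)) with hε
  have hεpos : 0 < ε := by
    rw [hε, Finset.lt_inf'_iff]
    intro v _
    exact hCw v
  have hεle : ε ≤ 1 := by
    rw [hε]
    exact le_trans (Finset.inf'_le _ (Finset.mem_univ a₀)) (Wt_le_one m v₀ _)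
  have hMx : MxAv m v₀ A T₀ ≤ 1 - ε := by
    apply Finset.sup'_le
    intro w _
    have h1 : (Cf w).length ≤ T₀ := by
      rw [hT₀]
      exact Finset.le_sup (f := fun v => (Cf v).length) (Finset.mem_univ w)
    calc Av m v₀ A w T₀ ≤ 1 - Wt m v₀ (Cf w) :=
          AvChain hd A (hCne w) (hC0 w) (hCA w) (by omega)
      _ ≤ 1 - ε := by
          have := Finset.inf'_le (fun v => Wt m v₀ (Cf v)) (Finset.mem_univ w)
          rw [hε]
          linarith
  have hAvB : ∀ (k : ℕ) (v : V) (u : ℕ), Av m v₀ A v (k * T₀ + u) ≤ (1-ε)^k := by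
    intro k v u
    calc Av m v₀ A v (k * T₀ + u) ≤ Av m v₀ A v (k * T₀) * MxAv m v₀ A u :=
          Av_decomp hd A u (k * T₀) v
      _ ≤ (MxAv m v₀ A T₀)^k * 1 := by
          apply mul_le_mul (Av_pow hd A T₀ k v) ?_ (Mx_nonneg A u)
            (pow_nonneg (Mx_nonneg A T₀) k)
          apply Finset.sup'_le
          intro w _
          exact Av_le_TOT hd A w u
      _ ≤ (1-ε)^k := by
          rw [mul_one]
          exact pow_le_pow_left₀ (Mx_nonneg A T₀) hMx k
  -- events
  set ZE : Set Ω := {ω | ∀ (k : ℕ) (q : Fin (k + 1) → V), q 0 = y → q (Fin.last k) ∈ A →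
      (∀ i : Fin k, 0 < m (q i.castSucc) (q i.succ)) →
      ∃ i : Fin (k + 1), ∃ j : ℕ,
        j ≤ sInf {n | X x ω n ∈ A} ∧ X x ω j = q i} with hZE
  have hP1 : ∀ Z : Set Ω, (P Z).toReal ≤ 1 := by
    intro Z
    have h : P Z ≤ P Set.univ := measure_mono (Set.subset_univ Z)
    rw [measure_univ] at h
    calc (P Z).toReal ≤ (1:ENNReal).toReal := ENNReal.toReal_mono (by simp) h
      _ = 1 := by simp
  have hPnn : ∀ Z : Set Ω, 0 ≤ (P Z).toReal := fun Z => ENNReal.toReal_nonneg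
  -- generic hitting-event lemmas
  have key_sinf : ∀ (X' : Ω → ℕ → V) (N : ℕ) (M : List V) (ω : Ω) (t : ℕ),
      M.length = N → FirstHit A v₀ M t → ω ∈ Cyl X' v₀ M →
      sInf {n | X' ω n ∈ A} = t := by
    intro X' N M ω t hlen hFH hω
    have hXeq : ∀ i, i < M.length → X' ω i = M.getD i v₀ := hω
    have htmem : t ∈ {n | X' ω n ∈ A} := by
      rw [Set.mem_setOf_eq, hXeq t hFH.1]
      exact hFH.2.1
    have hle : sInf {n | X' ω n ∈ A} ≤ t := Nat.sInf_le htmem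
    have hmem : X' ω (sInf {n | X' ω n ∈ A}) ∈ A := Nat.sInf_mem ⟨t, htmem⟩
    rcases lt_or_eq_of_le hle with hlt | heq
    · exfalso
      have hlen2 : sInf {n | X' ω n ∈ A} < M.length := by
        have := hFH.1
        omega
      rw [hXeq _ hlen2] at hmem
      exact hFH.2.2 _ hlt hmem
    · exact heq
  have key_sub_S : ∀ (X' : Ω → ℕ → V) (S : Set V) (N : ℕ),
      ∀ M ∈ Lists V N, (∃ t, FirstHit A v₀ M t ∧
          (M.take (t+1)).getD ((M.take (t+1)).length - 1) v₀ ∈ S) →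
      Cyl X' v₀ M ⊆ {ω | X' ω (sInf {n | X' ω n ∈ A}) ∈ S} := by
    intro X' S N M hM ⟨t, hFH, hQ⟩ ω hω
    have hlen : M.length = N := mem_Lists.mp hM
    have hFH1 := hFH.1
    rw [take_last_getD _ hFH.1] at hQ
    rw [Set.mem_setOf_eq, key_sinf X' N M ω t hlen hFH hω, hω t (by omega)]
    exact hQ
  have key_up_S : ∀ (X' : Ω → ℕ → V) (S : Set V) (T : ℕ),
      ∀ ω ∈ {ω | X' ω (sInf {n | X' ω n ∈ A}) ∈ S},
      (∃ t, FirstHit A v₀ (trajL X' ω (T+1)) t ∧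
        ((trajL X' ω (T+1)).take (t+1)).getD
          (((trajL X' ω (T+1)).take (t+1)).length - 1) v₀ ∈ S)
      ∨ NoA A (trajL X' ω (T+1)) := by
    intro X' S T ω hω
    by_cases hhit : ∃ i, i ≤ T ∧ X' ω i ∈ A
    · left
      obtain ⟨i0, hi0, hi0A⟩ := hhit
      have hne : {n | X' ω n ∈ A}.Nonempty := ⟨i0, hi0A⟩
      set t := sInf {n | X' ω n ∈ A} with ht
      have htle : t ≤ i0 := Nat.sInf_le hi0A
      have htA : X' ω t ∈ A := Nat.sInf_mem hne
      have hFH : FirstHit A v₀ (trajL X' ω (T+1)) t := by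
        refine ⟨by rw [trajL_length]; omega, ?_, ?_⟩
        · rw [trajL_getD (v₀ := v₀) X' ω (by omega)]
          exact htA
        · intro i hi
          rw [trajL_getD (v₀ := v₀) X' ω (by omega)]
          intro hcon
          have := Nat.sInf_le (s := {n | X' ω n ∈ A}) hcon
          omega
      refine ⟨t, hFH, ?_⟩
      rw [take_last_getD _ hFH.1, trajL_getD (v₀ := v₀) X' ω (by omega)]
      exact hω
    · right
      intro u hu
      rw [List.mem_iff_getElem] at hu
      obtain ⟨i, hi, rfl⟩ := hu
      rw [trajL_length] at hi
      rw [← List.getD_eq_getElem _ v₀ (by rw [trajL_length]; omega),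
        trajL_getD (v₀ := v₀) X' ω hi]
      intro hcon
      exact hhit ⟨i, by omega, hcon⟩
  have key_sub_E : ∀ (N : ℕ), ∀ M ∈ Lists V N,
      (∃ t, FirstHit A v₀ M t ∧ DiscP m v₀ y A (M.take (t+1))) →
      Cyl (X x) v₀ M ⊆ ZE := by
    intro N M hM ⟨t, hFH, hQ⟩ ω hω
    have hlen : M.length = N := mem_Lists.mp hM
    have hFH1 := hFH.1
    have hsinf := key_sinf (X x) N M ω t hlen hFH hω
    intro k g hg0 hgl hgs
    obtain ⟨i, jj, hjj, hv⟩ := hQ k g hg0 hgl hgs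
    have hjt : jj ≤ t := by
      have : (M.take (t+1)).length = t + 1 := by rw [List.length_take]; omega
      omega
    refine ⟨i, jj, by omega, ?_⟩
    rw [hω jj (by omega)]
    rw [getD_take' _ _ _ (by omega) (by omega)] at hv
    exact hv
  have key_up_E : ∀ (T : ℕ), ∀ ω ∈ ZE,
      (∃ t, FirstHit A v₀ (trajL (X x) ω (T+1)) t ∧
        DiscP m v₀ y A ((trajL (X x) ω (T+1)).take (t+1)))
      ∨ NoA A (trajL (X x) ω (T+1)) := by
    intro T ω hω
    by_cases hhit : ∃ i, i ≤ T ∧ X x ω i ∈ A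
    · left
      obtain ⟨i0, hi0, hi0A⟩ := hhit
      have hne : {n | X x ω n ∈ A}.Nonempty := ⟨i0, hi0A⟩
      set t := sInf {n | X x ω n ∈ A} with ht
      have htle : t ≤ i0 := Nat.sInf_le hi0A
      have htA : X x ω t ∈ A := Nat.sInf_mem hne
      have hFH : FirstHit A v₀ (trajL (X x) ω (T+1)) t := by
        refine ⟨by rw [trajL_length]; omega, ?_, ?_⟩
        · rw [trajL_getD (v₀ := v₀) (X x) ω (by omega)]
          exact htA
        · intro i hi
          rw [trajL_getD (v₀ := v₀) (X x) ω (by omega)]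
          intro hcon
          have := Nat.sInf_le (s := {n | X x ω n ∈ A}) hcon
          omega
      refine ⟨t, hFH, ?_⟩
      intro k g hg0 hgl hgs
      obtain ⟨i, jj, hjj, hv⟩ := hω k g hg0 hgl hgs
      have hlt : ((trajL (X x) ω (T+1)).take (t+1)).length = t + 1 := by
        rw [List.length_take, trajL_length]; omega
      refine ⟨i, jj, by omega, ?_⟩
      rw [getD_take' _ _ _ (by omega) (by rw [trajL_length]; omega),
        trajL_getD (v₀ := v₀) (X x) ω (by omega)]
      exact hv
    · right
      intro u hu
      rw [List.mem_iff_getElem] at hu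
      obtain ⟨i, hi, rfl⟩ := hu
      rw [trajL_length] at hi
      rw [← List.getD_eq_getElem _ v₀ (by rw [trajL_length]; omega),
        trajL_getD (v₀ := v₀) (X x) ω hi]
      intro hcon
      exact hhit ⟨i, by omega, hcon⟩
  -- sums
  set aF : Set V → ℕ → ℝ := fun S N =>
    ∑ L ∈ SPF A v₀ x N, if L.getD (L.length - 1) v₀ ∈ S then Wt m v₀ L else 0 with haF
  set bF : Set V → ℕ → ℝ := fun S N =>
    ∑ L ∈ SPF A v₀ y N, if L.getD (L.length - 1) v₀ ∈ S then Wt m v₀ L else 0 with hbF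
  set eF : ℕ → ℝ := fun N =>
    ∑ L ∈ SPF A v₀ x N, if DiscP m v₀ y A L then Wt m v₀ L else 0 with heF
  set bU : ℕ → ℝ := fun N => ∑ L ∈ SPF A v₀ y N, Wt m v₀ L with hbU
  set aU : ℕ → ℝ := fun N => ∑ L ∈ SPF A v₀ x N, Wt m v₀ L with haU
  set μx : Set V → ℝ := fun S => (P {ω | X x ω (sInf {n | X x ω n ∈ A}) ∈ S}).toReal with hμx
  set μy : Set V → ℝ := fun S => (P {ω | X y ω (sInf {n | X y ω n ∈ A}) ∈ S}).toReal with hμy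
  set PE : ℝ := (P ZE).toReal with hPE
  have hlow_x : ∀ (S : Set V) (T : ℕ), aF S (T+1) ≤ μx S := by
    intro S T
    simp only [haF, hμx]
    rw [← bridge hd (fun L => L.getD (L.length - 1) v₀ ∈ S) (T+1)]
    apply sandwich_low P (X x) hd (hX x)
      (fun M => ∃ t, FirstHit A v₀ M t ∧
        (M.take (t+1)).getD ((M.take (t+1)).length - 1) v₀ ∈ S) (by omega)
    intro M hM _ hR
    exact key_sub_S (X x) S (T+1) M hM hR
  have hlow_y : ∀ (S : Set V) (T : ℕ), bF S (T+1) ≤ μy S := by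
    intro S T
    simp only [hbF, hμy]
    rw [← bridge hd (fun L => L.getD (L.length - 1) v₀ ∈ S) (T+1)]
    apply sandwich_low P (X y) hd (hX y)
      (fun M => ∃ t, FirstHit A v₀ M t ∧
        (M.take (t+1)).getD ((M.take (t+1)).length - 1) v₀ ∈ S) (by omega)
    intro M hM _ hR
    exact key_sub_S (X y) S (T+1) M hM hR
  have hlow_E : ∀ (T : ℕ), eF (T+1) ≤ PE := by
    intro T
    simp only [heF, hPE]
    rw [← bridge hd (DiscP m v₀ y A) (T+1)]
    apply sandwich_low P (X x) hd (hX x)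
      (fun M => ∃ t, FirstHit A v₀ M t ∧ DiscP m v₀ y A (M.take (t+1))) (by omega)
    intro M hM _ hR
    exact key_sub_E (T+1) M hM hR
  have hup_x : ∀ (S : Set V) (T : ℕ), μx S ≤ aF S (T+1) + Av m v₀ A x T := by
    intro S T
    simp only [haF, hμx]
    rw [← bridge hd (fun L => L.getD (L.length - 1) v₀ ∈ S) (T+1)]
    apply sandwich_up P (X x) hd (hX x)
      (fun M => ∃ t, FirstHit A v₀ M t ∧
        (M.take (t+1)).getD ((M.take (t+1)).length - 1) v₀ ∈ S) T
    exact key_up_S (X x) S T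
  have hup_y : ∀ (S : Set V) (T : ℕ), μy S ≤ bF S (T+1) + Av m v₀ A y T := by
    intro S T
    simp only [hbF, hμy]
    rw [← bridge hd (fun L => L.getD (L.length - 1) v₀ ∈ S) (T+1)]
    apply sandwich_up P (X y) hd (hX y)
      (fun M => ∃ t, FirstHit A v₀ M t ∧
        (M.take (t+1)).getD ((M.take (t+1)).length - 1) v₀ ∈ S) T
    exact key_up_S (X y) S T
  have hup_E : ∀ (T : ℕ), PE ≤ eF (T+1) + Av m v₀ A x T := by
    intro T
    simp only [heF, hPE]
    rw [← bridge hd (DiscP m v₀ y A) (T+1)]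
    apply sandwich_up P (X x) hd (hX x)
      (fun M => ∃ t, FirstHit A v₀ M t ∧ DiscP m v₀ y A (M.take (t+1))) T
    exact key_up_E T
  -- universal sums
  have haF_univ : ∀ N, aF Set.univ N = aU N := by
    intro N
    simp only [haF, haU]
    apply Finset.sum_congr rfl
    intro L _
    rw [if_pos (Set.mem_univ _)]
  have hbF_univ : ∀ N, bF Set.univ N = bU N := by
    intro N
    simp only [hbF, hbU]
    apply Finset.sum_congr rfl
    intro L _
    rw [if_pos (Set.mem_univ _)]
  have hμx_univ : μx Set.univ = 1 := by
    simp only [hμx]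
    have : {ω | X x ω (sInf {n | X x ω n ∈ A}) ∈ (Set.univ : Set V)} = Set.univ := by
      ext ω; simp
    rw [this, measure_univ]
    simp
  have hμy_univ : μy Set.univ = 1 := by
    simp only [hμy]
    have : {ω | X y ω (sInf {n | X y ω n ∈ A}) ∈ (Set.univ : Set V)} = Set.univ := by
      ext ω; simp
    rw [this, measure_univ]
    simp
  have haU_le : ∀ T, aU (T+1) ≤ 1 := by
    intro T
    rw [← haF_univ]
    exact le_trans (hlow_x Set.univ T) (by rw [hμx_univ])
  have hbU_le : ∀ T, bU (T+1) ≤ 1 := by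
    intro T
    rw [← hbF_univ]
    exact le_trans (hlow_y Set.univ T) (by rw [hμy_univ])
  have haU_ge : ∀ T, 1 - Av m v₀ A x T ≤ aU (T+1) := by
    intro T
    have := hup_x Set.univ T
    rw [hμx_univ, haF_univ] at this
    linarith
  have hbU_ge : ∀ T, 1 - Av m v₀ A y T ≤ bU (T+1) := by
    intro T
    have := hup_y Set.univ T
    rw [hμy_univ, hbF_univ] at this
    linarith
  have hsplit_a : ∀ (S : Set V) (N : ℕ), aF S N + aF Sᶜ N = aU N := by
    intro S N
    simp only [haF, haU]
    rw [← Finset.sum_add_distrib]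
    apply Finset.sum_congr rfl
    intro L _
    by_cases hS : L.getD (L.length - 1) v₀ ∈ S
    · rw [if_pos hS, if_neg (show L.getD (L.length - 1) v₀ ∉ Sᶜ from fun hc => hc hS),
        add_zero]
    · rw [if_neg hS, if_pos (show L.getD (L.length - 1) v₀ ∈ Sᶜ from hS), zero_add]
  have hsplit_b : ∀ (S : Set V) (N : ℕ), bF S N + bF Sᶜ N = bU N := by
    intro S N
    simp only [hbF, hbU]
    rw [← Finset.sum_add_distrib]
    apply Finset.sum_congr rfl
    intro L _
    by_cases hS : L.getD (L.length - 1) v₀ ∈ S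
    · rw [if_pos hS, if_neg (show L.getD (L.length - 1) v₀ ∉ Sᶜ from fun hc => hc hS),
        add_zero]
    · rw [if_neg hS, if_pos (show L.getD (L.length - 1) v₀ ∈ Sᶜ from hS), zero_add]
  have haF_nonneg : ∀ S N, 0 ≤ aF S N := by
    intro S N
    simp only [haF]
    apply Finset.sum_nonneg
    intro L _
    split <;> simp [Wt_nonneg]
  have hbF_nonneg : ∀ S N, 0 ≤ bF S N := by
    intro S N
    simp only [hbF]
    apply Finset.sum_nonneg
    intro L _
    split <;> simp [Wt_nonneg]
  -- the core inequality, packaged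
  have hcore : ∀ (S : Set V) (T : ℕ),
      aF S (T+1) + eF (T+1) ≤ 1 + bF S (2*(T+1)) + (1 - bU (T+1)) := by
    intro S T
    have h2T : 2*(T+1) = (2*T+1)+1 := by ring
    apply core_ineq (y := y) (x := x) S (T+1) (haU_le T) (by rw [h2T]; exact haU_le (2*T+1))
      (hbU_le T)
  -- final bound, for each S
  have hfinal : ∀ S : Set V, |μx S - μy S| ≤ 1 - PE := by
    intro S
    rw [abs_le]
    have h1e : 1 - ε < 1 := by linarith
    have h1e0 : 0 ≤ 1 - ε := by linarith
    constructor
    ·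
      rw [neg_le, neg_sub]
      apply le_of_forall_pos_le_add
      intro δ hδ
      obtain ⟨k, hk⟩ := exists_pow_lt_of_lt_one (show (0:ℝ) < δ/4 by linarith) h1e
      set T := k * T₀ with hT
      have hAvx : Av m v₀ A x T ≤ (1-ε)^k := by
        have := hAvB k x 0
        rwa [Nat.add_zero] at this
      have hAvy : Av m v₀ A y T ≤ (1-ε)^k := by
        have := hAvB k y 0
        rwa [Nat.add_zero] at this
      have hAvy2 : Av m v₀ A y (2*T+1) ≤ (1-ε)^k := by
        have := hAvB k y (T+1)
        rwa [show k*T₀ + (T+1) = 2*T+1 from by rw [hT]; ring] at this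
      have hc := hcore Sᶜ T
      have hu_y : μy S ≤ bF S (2*(T+1)) + (1-ε)^k := by
        have := hup_y S (2*T+1)
        rw [show (2*T+1)+1 = 2*(T+1) from by ring] at this
        linarith
      have hu_E : PE ≤ eF (T+1) + (1-ε)^k := by
        have := hup_E T
        linarith
      have hl_x : aF Sᶜ (T+1) ≥ 1 - Av m v₀ A x T - μx S := by
        have hs := hsplit_a S (T+1)
        have hg := haU_ge T
        have hlx := hlow_x S T
        linarith
      have hbsum : bF S (2*(T+1)) + bF Sᶜ (2*(T+1)) ≤ 1 := by
        have := hsplit_b S (2*(T+1))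
        have h2T : 2*(T+1) = (2*T+1)+1 := by ring
        have := hbU_le (2*T+1)
        rw [← h2T] at this
        linarith [hsplit_b S (2*(T+1))]
      have hbU1 : 1 - bU (T+1) ≤ (1-ε)^k := by
        have := hbU_ge T
        linarith
      -- combine: μy S + PE ≤ 1 + μx S + 4(1-ε)^k
      have : μy S + PE ≤ 1 + μx S + 4*(1-ε)^k := by
        have hc' : eF (T+1) ≤ 1 + bF Sᶜ (2*(T+1)) + (1 - bU (T+1)) - aF Sᶜ (T+1) := by
          linarith [hcore Sᶜ T]
        linarith
      linarith
    · -- μx S - μy S ≤ 1 - PE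
      apply le_of_forall_pos_le_add
      intro δ hδ
      obtain ⟨k, hk⟩ := exists_pow_lt_of_lt_one (show (0:ℝ) < δ/3 by linarith) h1e
      set T := k * T₀ with hT
      have hAvx : Av m v₀ A x T ≤ (1-ε)^k := by
        have := hAvB k x 0
        rwa [Nat.add_zero] at this
      have hAvy : Av m v₀ A y T ≤ (1-ε)^k := by
        have := hAvB k y 0
        rwa [Nat.add_zero] at this
      have hu_x : μx S ≤ aF S (T+1) + (1-ε)^k := by
        have := hup_x S T
        linarith
      have hu_E : PE ≤ eF (T+1) + (1-ε)^k := by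
        have := hup_E T
        linarith
      have hl_y : bF S (2*(T+1)) ≤ μy S := by
        have := hlow_y S (2*T+1)
        rw [show (2*T+1)+1 = 2*(T+1) from by ring] at this
        exact this
      have hbU1 : 1 - bU (T+1) ≤ (1-ε)^k := by
        have := hbU_ge T
        linarith
      have := hcore S T
      linarith
  -- conclude
  have hPE1 : PE ≤ 1 := hP1 _
  exact Real.iSup_le (fun S => hfinal S) (by linarith)
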